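/- arXiv:2107.11421 — 4 statements merged into one kernel-verified Lean document; each statement's English description precedes it below -/
import Mathlib

section
/- Let S and Q be VPAs over a common alphabet A with n and m states respectively. Then there exists a non-blocking VPA P over A with at most (n+1)(m+1) states such that L(P) = L(S) ∪ L(Q); moreover, if S and Q are deterministic, then P is deterministic and has no ε-transitions. In particular, visibly pushdown languages are closed under union. -/
inductive VPKind : Type where
  | call : VPKind
  | ret : VPKind
  | intern : VPKind

/-- A visibly pushdown automaton over an alphabet `A` partitioned by `kind` into
call (push), return (pop) and simple (internal) symbols.  The stack bottom `⊥` is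
implicit: a stack is a `List Stack`, the empty list meaning the stack contains only `⊥`.
`intT` transitions labelled by `none` are ε-transitions. -/
structure VPA (A : Type) (kind : A → VPKind) where
  State : Type
  Stack : Type
  fintypeState : Fintype State
  init : Set State
  final : Set State
  pushT : Set (State × A × Stack × State)
  popT : Set (State × A × Option Stack × State)
  intT : Set (State × Option A × State)
  push_call : ∀ p a Z q, (p, a, Z, q) ∈ pushT → kind a = VPKind.call
  pop_ret : ∀ p a Z q, (p, a, Z, q) ∈ popT → kind a = VPKind.ret
  int_simple : ∀ p a q, (p, some a, q) ∈ intT → kind a = VPKind.intern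

attribute [instance] VPA.fintypeState

namespace VPA

variable {A : Type} {kind : A → VPKind}

abbrev Conf (M : VPA A kind) : Type := M.State × List A × List M.Stack

inductive Step (M : VPA A kind) : M.Conf → M.Conf → Prop where
  | push {p q : M.State} {a : A} {Z : M.Stack} {σ : List A} {α : List M.Stack} :
      (p, a, Z, q) ∈ M.pushT → Step M (p, a :: σ, α) (q, σ, Z :: α)
  | pop {p q : M.State} {a : A} {Z : M.Stack} {σ : List A} {α : List M.Stack} :
      (p, a, some Z, q) ∈ M.popT → Step M (p, a :: σ, Z :: α) (q, σ, α)
  | popEmpty {p q : M.State} {a : A} {σ : List A} :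
      (p, a, none, q) ∈ M.popT → Step M (p, a :: σ, []) (q, σ, [])
  | int {p q : M.State} {a : A} {σ : List A} {α : List M.Stack} :
      (p, some a, q) ∈ M.intT → Step M (p, a :: σ, α) (q, σ, α)
  | eps {p q : M.State} {σ : List A} {α : List M.Stack} :
      (p, none, q) ∈ M.intT → Step M (p, σ, α) (q, σ, α)

/-- Reflexive-transitive closure `↦*` of the one-step move relation. -/
def Steps (M : VPA A kind) : M.Conf → M.Conf → Prop := Relation.ReflTransGen M.Step

/-- `n`-th power `↦ⁿ` of the one-step move relation. -/
def StepN (M : VPA A kind) : ℕ → M.Conf → M.Conf → Prop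
  | 0 => fun c c' => c = c'
  | n + 1 => fun c c' => ∃ d, M.Step c d ∧ StepN M n d c'

def Lang (M : VPA A kind) : Set (List A) :=
  { σ | ∃ s₀ ∈ M.init, ∃ p ∈ M.final, ∃ β, M.Steps (s₀, σ, []) (p, [], β) }

def NoEps (M : VPA A kind) : Prop := ∀ p q, (p, none, q) ∉ M.intT

def Deterministic (M : VPA A kind) : Prop :=
  M.init.Subsingleton ∧
  (∀ p a Z₁ q₁ Z₂ q₂, (p, a, Z₁, q₁) ∈ M.pushT → (p, a, Z₂, q₂) ∈ M.pushT →
      Z₁ = Z₂ ∧ q₁ = q₂) ∧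
  (∀ p a Z q₁ q₂, (p, a, Z, q₁) ∈ M.popT → (p, a, Z, q₂) ∈ M.popT → q₁ = q₂) ∧
  (∀ p a q₁ q₂, (p, a, q₁) ∈ M.intT → (p, a, q₂) ∈ M.intT → q₁ = q₂) ∧
  (∀ p q',
    ((∃ a Z q, (p, a, Z, q) ∈ M.pushT) ∨ (∃ a Z q, (p, a, Z, q) ∈ M.popT) ∨
      (∃ a q, (p, some a, q) ∈ M.intT)) → (p, none, q') ∉ M.intT)

def NonBlocking (M : VPA A kind) : Prop :=
  ∀ (s : M.State) (σ : List A) (α : List M.Stack), ∃ p β, M.Steps (s, σ, α) (p, [], β)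

/-- The synchronous product of two VPAs over a common alphabet. -/
def prod (M N : VPA A kind) : VPA A kind where
  State := M.State × N.State
  Stack := M.Stack × N.Stack
  fintypeState := inferInstance
  init := M.init ×ˢ N.init
  final := M.final ×ˢ N.final
  pushT := { t | (t.1.1, t.2.1, t.2.2.1.1, t.2.2.2.1) ∈ M.pushT ∧
                 (t.1.2, t.2.1, t.2.2.1.2, t.2.2.2.2) ∈ N.pushT }
  popT := { t |
      match t.2.2.1 with
      | some Z => (t.1.1, t.2.1, some Z.1, t.2.2.2.1) ∈ M.popT ∧
                  (t.1.2, t.2.1, some Z.2, t.2.2.2.2) ∈ N.popT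
      | none => (t.1.1, t.2.1, (none : Option M.Stack), t.2.2.2.1) ∈ M.popT ∧
                (t.1.2, t.2.1, (none : Option N.Stack), t.2.2.2.2) ∈ N.popT }
  intT := { t |
      match t.2.1 with
      | some a => (t.1.1, some a, t.2.2.1) ∈ M.intT ∧ (t.1.2, some a, t.2.2.2) ∈ N.intT
      | none => (t.1.1 = t.2.2.1 ∧ (t.1.2, none, t.2.2.2) ∈ N.intT) ∨
                (t.1.2 = t.2.2.2 ∧ (t.1.1, none, t.2.2.1) ∈ M.intT) }
  push_call := fun _ _ _ _ h => M.push_call _ _ _ _ h.1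
  pop_ret := by
    intro p a Z q h
    cases Z with
    | some Z => exact M.pop_ret _ _ _ _ h.1
    | none => exact M.pop_ret _ _ _ _ h.1
  int_simple := fun _ _ _ h => M.int_simple _ _ _ h.1

end VPA

/-- A visibly pushdown transition system over an alphabet `L` partitioned by `kind`.
`intT` transitions labelled by `none` are silent `ς`-transitions. -/
structure VPTS (L : Type) (kind : L → VPKind) where
  State : Type
  Stack : Type
  fintypeState : Fintype State
  init : Set State
  pushT : Set (State × L × Stack × State)
  popT : Set (State × L × Option Stack × State)
  intT : Set (State × Option L × State)
  push_call : ∀ p a Z q, (p, a, Z, q) ∈ pushT → kind a = VPKind.call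
  pop_ret : ∀ p a Z q, (p, a, Z, q) ∈ popT → kind a = VPKind.ret
  int_simple : ∀ p a q, (p, some a, q) ∈ intT → kind a = VPKind.intern

attribute [instance] VPTS.fintypeState

namespace VPTS

variable {L : Type} {kind : L → VPKind}

abbrev Conf (M : VPTS L kind) : Type := M.State × List M.Stack

/-- `M.Obs c σ c'` means `c ⇒^σ c'`: there is a sequence of one-step moves from `c`
to `c'` whose sequence of non-silent labels is `σ`. -/
inductive Obs (M : VPTS L kind) : M.Conf → List L → M.Conf → Prop where
  | refl (c : M.Conf) : Obs M c [] c
  | push {p q : M.State} {a : L} {Z : M.Stack} {α : List M.Stack} {σ : List L} {c : M.Conf} :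
      (p, a, Z, q) ∈ M.pushT → Obs M (q, Z :: α) σ c → Obs M (p, α) (a :: σ) c
  | pop {p q : M.State} {a : L} {Z : M.Stack} {α : List M.Stack} {σ : List L} {c : M.Conf} :
      (p, a, some Z, q) ∈ M.popT → Obs M (q, α) σ c → Obs M (p, Z :: α) (a :: σ) c
  | popEmpty {p q : M.State} {a : L} {σ : List L} {c : M.Conf} :
      (p, a, none, q) ∈ M.popT → Obs M (q, []) σ c → Obs M (p, []) (a :: σ) c
  | int {p q : M.State} {a : L} {α : List M.Stack} {σ : List L} {c : M.Conf} :
      (p, some a, q) ∈ M.intT → Obs M (q, α) σ c → Obs M (p, α) (a :: σ) c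
  | silent {p q : M.State} {α : List M.Stack} {σ : List L} {c : M.Conf} :
      (p, none, q) ∈ M.intT → Obs M (q, α) σ c → Obs M (p, α) σ c

/-- The observable traces of `M`. -/
def otr (M : VPTS L kind) : Set (List L) :=
  { σ | ∃ s₀ ∈ M.init, ∃ c, M.Obs (s₀, []) σ c }

/-- `I` (D,F)-visibly conforms to `S`. -/
def VConf (I S : VPTS L kind) (D F : Set (List L)) : Prop :=
  (∀ σ ∈ I.otr ∩ F, σ ∉ S.otr) ∧ (∀ σ ∈ I.otr ∩ D, σ ∈ S.otr)

def after (M : VPTS L kind) (c : M.Conf) (σ : List L) : Set M.Conf :=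
  { c' | M.Obs c σ c' }

/-- The output symbols (members of `LU`) enabled at some configuration of `C`. -/
def outSet (M : VPTS L kind) (LU : Set L) (C : Set M.Conf) : Set L :=
  { ℓ | ℓ ∈ LU ∧ ∃ c ∈ C, ∃ c', M.Obs c [ℓ] c' }

/-- `I` ioco-like conforms to `S`, with output alphabet `LU`. -/
def Ioco (LU : Set L) (I S : VPTS L kind) : Prop :=
  ∀ σ ∈ S.otr, ∀ q₀ ∈ I.init, ∀ ℓ ∈ I.outSet LU (I.after (q₀, []) σ),
    ∃ s₀ ∈ S.init, ℓ ∈ S.outSet LU (S.after (s₀, []) σ)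

/-- A VPTS is deterministic: at most one initial state and each observable trace
reaches a unique configuration. -/
def Deterministic (M : VPTS L kind) : Prop :=
  M.init.Subsingleton ∧
  ∀ (σ : List L), ∀ s₀ ∈ M.init, ∀ s₀' ∈ M.init, ∀ c c',
    M.Obs (s₀, []) σ c → M.Obs (s₀', []) σ c' → c = c'

/-- The cross product of two VPTSs over a common alphabet: observable moves
synchronize, silent moves interleave. -/
def prod (M N : VPTS L kind) : VPTS L kind where
  State := M.State × N.State
  Stack := M.Stack × N.Stack
  fintypeState := inferInstance
  init := M.init ×ˢ N.init
  pushT := { t | (t.1.1, t.2.1, t.2.2.1.1, t.2.2.2.1) ∈ M.pushT ∧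
                 (t.1.2, t.2.1, t.2.2.1.2, t.2.2.2.2) ∈ N.pushT }
  popT := { t |
      match t.2.2.1 with
      | some Z => (t.1.1, t.2.1, some Z.1, t.2.2.2.1) ∈ M.popT ∧
                  (t.1.2, t.2.1, some Z.2, t.2.2.2.2) ∈ N.popT
      | none => (t.1.1, t.2.1, (none : Option M.Stack), t.2.2.2.1) ∈ M.popT ∧
                (t.1.2, t.2.1, (none : Option N.Stack), t.2.2.2.2) ∈ N.popT }
  intT := { t |
      match t.2.1 with
      | some a => (t.1.1, some a, t.2.2.1) ∈ M.intT ∧ (t.1.2, some a, t.2.2.2) ∈ N.intT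
      | none => (t.1.1 = t.2.2.1 ∧ (t.1.2, none, t.2.2.2) ∈ N.intT) ∨
                (t.1.2 = t.2.2.2 ∧ (t.1.1, none, t.2.2.1) ∈ M.intT) }
  push_call := fun _ _ _ _ h => M.push_call _ _ _ _ h.1
  pop_ret := by
    intro p a Z q h
    cases Z with
    | some Z => exact M.pop_ret _ _ _ _ h.1
    | none => exact M.pop_ret _ _ _ _ h.1
  int_simple := fun _ _ _ h => M.int_simple _ _ _ h.1

/-- `I` passes the fault model `(T, fail)`: no run of the cross product reaches
the `fail` state of `T`. -/
def Passes (T : VPTS L kind) (fail : T.State) (I : VPTS L kind) : Prop :=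
  ∀ (σ : List L), ∀ t₀ ∈ T.init, ∀ q₀ ∈ I.init, ∀ (q : I.State)
    (α : List (T.Stack × I.Stack)),
    ¬ (T.prod I).Obs ((t₀, q₀), []) σ ((fail, q), α)

/-- `Q` adheres to the test suite `T`. -/
def Adheres (Q : VPTS L kind) (T : Set (List L)) : Prop := Q.otr ∩ T = ∅

/-- `T` is a complete (sound and exhaustive) test suite for `S` and `(D,F)`. -/
def CompleteSuite (S : VPTS L kind) (D F : Set (List L)) (T : Set (List L)) : Prop :=
  ∀ I : VPTS L kind, (Adheres I T ↔ VConf I S D F)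

/-- The concatenation `otr(S)·LU`. -/
def otrConcat (S : VPTS L kind) (LU : Set L) : Set (List L) :=
  { w | ∃ σ ∈ S.otr, ∃ ℓ ∈ LU, w = σ ++ [ℓ] }

end VPTS

namespace VPA

variable {A : Type} {kind : A → VPKind}

/-! ### Generic lemmas about `Steps` and `StepN` -/

lemma stepN_steps {M : VPA A kind} : ∀ {n c c'}, M.StepN n c c' → M.Steps c c' := by
  intro n
  induction n with
  | zero => intro c c' h; cases h; exact Relation.ReflTransGen.refl
  | succ n ih =>
    rintro c c' ⟨d, hd, hn⟩
    exact Relation.ReflTransGen.head hd (ih hn)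

lemma stepN_snoc {M : VPA A kind} : ∀ {n c d e}, M.StepN n c d → M.Step d e →
    M.StepN (n + 1) c e := by
  intro n
  induction n with
  | zero => intro c d e h hs; cases h; exact ⟨e, hs, rfl⟩
  | succ n ih =>
    rintro c d e ⟨f, hf, hn⟩ hs
    exact ⟨f, hf, ih hn hs⟩

lemma steps_stepN {M : VPA A kind} {c c'} (h : M.Steps c c') : ∃ n, M.StepN n c c' := by
  induction h with
  | refl => exact ⟨0, rfl⟩
  | tail _ hs ih => obtain ⟨n, hn⟩ := ih; exact ⟨n + 1, stepN_snoc hn hs⟩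

/-- A VPA all of whose one-letter moves are always enabled. -/
def Total (M : VPA A kind) : Prop :=
  ∀ (s : M.State) (a : A) (σ : List A) (α : List M.Stack),
    ∃ t β, M.Step (s, a :: σ, α) (t, σ, β)

lemma total_nonBlocking {M : VPA A kind} (h : M.Total) : M.NonBlocking := by
  intro s σ α
  induction σ generalizing s α with
  | nil => exact ⟨s, α, Relation.ReflTransGen.refl⟩
  | cons a σ ih =>
    obtain ⟨t, β, hstep⟩ := h s a σ α
    obtain ⟨p, γ, hsteps⟩ := ih t β
    exact ⟨p, γ, Relation.ReflTransGen.head hstep hsteps⟩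

/-- ε-reachability. -/
def ER (M : VPA A kind) : M.State → M.State → Prop :=
  Relation.ReflTransGen (fun p q => (p, none, q) ∈ M.intT)

lemma ER_steps {M : VPA A kind} {p q : M.State} (h : M.ER p q) (σ : List A)
    (α : List M.Stack) : M.Steps (p, σ, α) (q, σ, α) := by
  induction h with
  | refl => exact Relation.ReflTransGen.refl
  | tail _ he ih => exact Relation.ReflTransGen.tail ih (Step.eps he)

lemma rtg_unique {α : Type*} {R : α → α → Prop} (hf : ∀ a b c, R a b → R a c → b = c)
    {a b c : α} (h1 : Relation.ReflTransGen R a b) (h2 : Relation.ReflTransGen R a c)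
    (t1 : ∀ x, ¬ R b x) (t2 : ∀ x, ¬ R c x) : b = c := by
  induction h1 using Relation.ReflTransGen.head_induction_on with
  | refl =>
    rcases h2.cases_head with rfl | ⟨d, hd, _⟩
    · rfl
    · exact absurd hd (t1 d)
  | head h' hrest ih =>
    rcases h2.cases_head with rfl | ⟨d, hd, hdc⟩
    · exact absurd h' (t2 _)
    · rw [hf _ _ _ h' hd] at *; exact ih hdc

/-! ### The totalized, ε-free version of a VPA -/

def canPush (M : VPA A kind) (s : Option M.State) (a : A) : Prop :=
  ∃ p p' Z q, s = some p ∧ M.ER p p' ∧ (p', a, Z, q) ∈ M.pushT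

def popMatch (M : VPA A kind) (p' : M.State) (a : A) (t : Option (Option M.Stack))
    (q : M.State) : Prop :=
  match t with
  | some (some Z) => (p', a, some Z, q) ∈ M.popT
  | some none => False
  | none => (p', a, none, q) ∈ M.popT

def canPop (M : VPA A kind) (s : Option M.State) (a : A) (t : Option (Option M.Stack)) : Prop :=
  ∃ p p' q, s = some p ∧ M.ER p p' ∧ M.popMatch p' a t q

def canInt (M : VPA A kind) (s : Option M.State) (a : A) : Prop :=
  ∃ p p' q, s = some p ∧ M.ER p p' ∧ (p', some a, q) ∈ M.intT

def tot (M : VPA A kind) : VPA A kind where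
  State := Option M.State
  Stack := Option M.Stack
  fintypeState := inferInstance
  init := { s | (∃ p ∈ M.init, s = some p) ∨ (s = none ∧ ¬ M.init.Nonempty) }
  final := { s | ∃ p f, s = some p ∧ f ∈ M.final ∧ M.ER p f }
  pushT := { t | (∃ p p' Z q, M.ER p p' ∧ (p', t.2.1, Z, q) ∈ M.pushT ∧
        t.1 = some p ∧ t.2.2.1 = some Z ∧ t.2.2.2 = some q) ∨
      (kind t.2.1 = VPKind.call ∧ ¬ M.canPush t.1 t.2.1 ∧ t.2.2.1 = none ∧ t.2.2.2 = none) }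
  popT := { t | (∃ p p' q, M.ER p p' ∧ M.popMatch p' t.2.1 t.2.2.1 q ∧
        t.1 = some p ∧ t.2.2.2 = some q) ∨
      (kind t.2.1 = VPKind.ret ∧ ¬ M.canPop t.1 t.2.1 t.2.2.1 ∧ t.2.2.2 = none) }
  intT := { t | ∃ a, t.2.1 = some a ∧
      ((∃ p p' q, M.ER p p' ∧ (p', some a, q) ∈ M.intT ∧ t.1 = some p ∧ t.2.2 = some q) ∨
       (kind a = VPKind.intern ∧ ¬ M.canInt t.1 a ∧ t.2.2 = none)) }
  push_call := by
    rintro p a Z q (⟨p₀, p', Z', q', _, horig, _, _, _⟩ | ⟨hk, _⟩)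
    · exact M.push_call _ _ _ _ horig
    · exact hk
  pop_ret := by
    rintro p a Z q (⟨p₀, p', q', _, horig, _, _⟩ | ⟨hk, _⟩)
    · cases Z with
      | none => exact M.pop_ret _ _ _ _ horig
      | some Z' =>
        cases Z' with
        | none => exact horig.elim
        | some W => exact M.pop_ret _ _ _ _ horig
    · exact hk
  int_simple := by
    rintro p a q ⟨a', ha', (⟨p₀, p', q', _, horig, _, _⟩ | ⟨hk, _⟩)⟩
    · cases ha'; exact M.int_simple _ _ _ horig
    · cases ha'; exact hk

lemma tot_noEps (M : VPA A kind) : (tot M).NoEps := by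
  rintro p q ⟨a, ha, _⟩
  cases ha

lemma tot_total (M : VPA A kind) : (tot M).Total := by
  intro s a σ α
  rcases hk : kind a with _ | _ | _
  · -- call
    by_cases h : M.canPush s a
    · obtain ⟨p, p', Z, q, rfl, hER, horig⟩ := h
      exact ⟨some q, some Z :: α,
        Step.push (Or.inl ⟨p, p', Z, q, hER, horig, rfl, rfl, rfl⟩)⟩
    · exact ⟨none, none :: α, Step.push (Or.inr ⟨hk, h, rfl, rfl⟩)⟩
  · -- ret
    cases α with
    | nil =>
      by_cases h : M.canPop s a none
      · obtain ⟨p, p', q, rfl, hER, hm⟩ := h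
        exact ⟨some q, [], Step.popEmpty (Or.inl ⟨p, p', q, hER, hm, rfl, rfl⟩)⟩
      · exact ⟨none, [], Step.popEmpty (Or.inr ⟨hk, h, rfl⟩)⟩
    | cons Z α' =>
      by_cases h : M.canPop s a (some Z)
      · obtain ⟨p, p', q, rfl, hER, hm⟩ := h
        exact ⟨some q, α', Step.pop (Or.inl ⟨p, p', q, hER, hm, rfl, rfl⟩)⟩
      · exact ⟨none, α', Step.pop (Or.inr ⟨hk, h, rfl⟩)⟩
  · -- intern
    by_cases h : M.canInt s a
    · obtain ⟨p, p', q, rfl, hER, horig⟩ := h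
      exact ⟨some q, α, Step.int ⟨a, rfl, Or.inl ⟨p, p', q, hER, horig, rfl, rfl⟩⟩⟩
    · exact ⟨none, α, Step.int ⟨a, rfl, Or.inr ⟨hk, h, rfl⟩⟩⟩

end VPA
namespace VPA

variable {A : Type} {kind : A → VPKind}

lemma tot_none_absorb {M : VPA A kind} :
    ∀ {n : ℕ} {σ : List A} {α : List (tot M).Stack} {c : (tot M).Conf},
      (tot M).StepN n (none, σ, α) c → c.1 = none := by
  intro n
  induction n with
  | zero => rintro σ α c rfl; rfl
  | succ n ih =>
    rintro σ α c ⟨d, hd, hn⟩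
    cases hd with
    | push h =>
      rcases h with ⟨p, p', Z, q, _, _, hsrc, _, _⟩ | ⟨_, _, _, htgt⟩
      · exact absurd hsrc (by simp)
      · cases htgt; exact ih hn
    | pop h =>
      rcases h with ⟨p, p', q, _, _, hsrc, _⟩ | ⟨_, _, htgt⟩
      · exact absurd hsrc (by simp)
      · cases htgt; exact ih hn
    | popEmpty h =>
      rcases h with ⟨p, p', q, _, _, hsrc, _⟩ | ⟨_, _, htgt⟩
      · exact absurd hsrc (by simp)
      · cases htgt; exact ih hn
    | int h =>
      rcases h with ⟨a, ha, ⟨p, p', q, _, _, hsrc, _⟩ | ⟨_, _, htgt⟩⟩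
      · exact absurd hsrc (by simp)
      · cases htgt; exact ih hn
    | eps h =>
      rcases h with ⟨a, ha, _⟩; cases ha

lemma tot_fwd {M : VPA A kind} :
    ∀ {n : ℕ} {p₀ p q : M.State} {σ τ : List A} {α β : List M.Stack},
      M.ER p₀ p → M.StepN n (p, σ, α) (q, τ, β) →
      ∃ r, M.ER r q ∧ (tot M).Steps (some p₀, σ, α.map some) (some r, τ, β.map some) := by
  intro n
  induction n with
  | zero =>
    rintro p₀ p q σ τ α β hER h
    injection h with h1 h2; injection h2 with h2 h3
    subst h1; subst h2; subst h3
    exact ⟨p₀, hER, Relation.ReflTransGen.refl⟩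
  | succ n ih =>
    rintro p₀ p q σ τ α β hER ⟨d, hd, hn⟩
    cases hd with
    | @push _ q₁ a Z σ₁ _ h =>
      obtain ⟨r, hr, hsteps⟩ := ih (Relation.ReflTransGen.refl) hn
      have hmem : ((some p₀ : (tot M).State), a, (some Z : (tot M).Stack), some q₁)
          ∈ (tot M).pushT := Or.inl ⟨p₀, p, Z, q₁, hER, h, rfl, rfl, rfl⟩
      exact ⟨r, hr, Relation.ReflTransGen.head (Step.push hmem) hsteps⟩
    | @pop _ q₁ a Z σ₁ α₁ h =>
      obtain ⟨r, hr, hsteps⟩ := ih (Relation.ReflTransGen.refl) hn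
      have hmem : ((some p₀ : (tot M).State), a, some (some Z : (tot M).Stack), some q₁)
          ∈ (tot M).popT := Or.inl ⟨p₀, p, q₁, hER, h, rfl, rfl⟩
      exact ⟨r, hr, Relation.ReflTransGen.head (Step.pop hmem) hsteps⟩
    | @popEmpty _ q₁ a σ₁ h =>
      obtain ⟨r, hr, hsteps⟩ := ih (Relation.ReflTransGen.refl) hn
      have hmem : ((some p₀ : (tot M).State), a, (none : Option (tot M).Stack), some q₁)
          ∈ (tot M).popT := Or.inl ⟨p₀, p, q₁, hER, h, rfl, rfl⟩
      exact ⟨r, hr, Relation.ReflTransGen.head (Step.popEmpty hmem) hsteps⟩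
    | @int _ q₁ a σ₁ _ h =>
      obtain ⟨r, hr, hsteps⟩ := ih (Relation.ReflTransGen.refl) hn
      have hmem : ((some p₀ : (tot M).State), some a, some q₁) ∈ (tot M).intT :=
        ⟨a, rfl, Or.inl ⟨p₀, p, q₁, hER, h, rfl, rfl⟩⟩
      exact ⟨r, hr, Relation.ReflTransGen.head (Step.int hmem) hsteps⟩
    | @eps _ q₁ _ _ h =>
      exact ih (Relation.ReflTransGen.tail hER h) hn

lemma tot_bwd {M : VPA A kind} :
    ∀ {n : ℕ} {p r : M.State} {σ τ : List A} {γ β : List (tot M).Stack} {α : List M.Stack},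
      (tot M).StepN n (some p, σ, γ) (some r, τ, β) → γ = α.map some →
      ∃ β', β = β'.map some ∧ M.Steps (p, σ, α) (r, τ, β') := by
  intro n
  induction n with
  | zero =>
    rintro p r σ τ γ β α h rfl
    injection h with h1 h2
    injection h1 with h1; injection h2 with h2 h3
    subst h1; subst h2; subst h3
    exact ⟨α, rfl, Relation.ReflTransGen.refl⟩
  | succ n ih =>
    rintro p r σ τ γ β α ⟨d, hd, hn⟩ hγ
    cases hd with
    | @push _ q₁ a Z σ₁ _ h =>
      rcases h with ⟨p₂, p', Z', q', hER, horig, hsrc, hZ, htgt⟩ | ⟨_, _, _, htgt⟩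
      · injection hsrc with hsrc; subst hsrc
        cases hZ; cases htgt
        obtain ⟨β', rfl, hsteps⟩ := ih (α := Z' :: α) hn (by subst hγ; rfl)
        exact ⟨β', rfl, Relation.ReflTransGen.trans (ER_steps hER _ _)
          (Relation.ReflTransGen.head (Step.push horig) hsteps)⟩
      · cases htgt; exact absurd (tot_none_absorb hn) (by simp)
    | @pop _ q₁ a Z σ₁ α₁ h =>
      obtain ⟨W, α', rfl⟩ : ∃ W α', α = W :: α' := by
        cases α with
        | nil => simp at hγ
        | cons W α' => exact ⟨W, α', rfl⟩
      simp only [List.map_cons, List.cons.injEq] at hγ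
      obtain ⟨rfl, rfl⟩ := hγ
      rcases h with ⟨p₂, p', q', hER, hm, hsrc, htgt⟩ | ⟨_, _, htgt⟩
      · injection hsrc with hsrc; subst hsrc
        cases htgt
        obtain ⟨β', rfl, hsteps⟩ := ih (α := α') hn rfl
        exact ⟨β', rfl, Relation.ReflTransGen.trans (ER_steps hER _ _)
          (Relation.ReflTransGen.head (Step.pop hm) hsteps)⟩
      · cases htgt; exact absurd (tot_none_absorb hn) (by simp)
    | @popEmpty _ q₁ a σ₁ h =>
      have hα : α = [] := by
        cases α with
        | nil => rfl
        | cons W α' => exact absurd hγ (by simp)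
      subst hα
      rcases h with ⟨p₂, p', q', hER, hm, hsrc, htgt⟩ | ⟨_, _, htgt⟩
      · injection hsrc with hsrc; subst hsrc
        cases htgt
        obtain ⟨β', rfl, hsteps⟩ := ih (α := []) hn rfl
        exact ⟨β', rfl, Relation.ReflTransGen.trans (ER_steps hER _ _)
          (Relation.ReflTransGen.head (Step.popEmpty hm) hsteps)⟩
      · cases htgt; exact absurd (tot_none_absorb hn) (by simp)
    | @int _ q₁ a σ₁ _ h =>
      rcases h with ⟨a', ha', ⟨p₂, p', q', hER, horig, hsrc, htgt⟩ | ⟨_, _, htgt⟩⟩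
      · cases ha'
        injection hsrc with hsrc; subst hsrc
        cases htgt
        obtain ⟨β', rfl, hsteps⟩ := ih hn hγ
        exact ⟨β', rfl, Relation.ReflTransGen.trans (ER_steps hER _ _)
          (Relation.ReflTransGen.head (Step.int horig) hsteps)⟩
      · cases ha'; cases htgt; exact absurd (tot_none_absorb hn) (by simp)
    | @eps _ q₁ _ _ h =>
      rcases h with ⟨a, ha, _⟩; cases ha

lemma tot_lang (M : VPA A kind) : (tot M).Lang = M.Lang := by
  ext σ
  constructor
  · rintro ⟨s₀', hs₀', pf, hpf, β, hsteps⟩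
    rcases hs₀' with ⟨s₀, hs₀, rfl⟩ | ⟨rfl, _⟩
    · obtain ⟨n, hn⟩ := steps_stepN hsteps
      obtain ⟨r, f, rfl, hf, hrf⟩ := hpf
      obtain ⟨β', rfl, hsteps'⟩ := tot_bwd (α := []) hn rfl
      exact ⟨s₀, hs₀, f, hf, β',
        Relation.ReflTransGen.trans hsteps' (ER_steps hrf _ _)⟩
    · obtain ⟨n, hn⟩ := steps_stepN hsteps
      obtain ⟨r, f, hrf, _, _⟩ := hpf
      exact absurd (tot_none_absorb hn) (by simp [hrf])
  · rintro ⟨s₀, hs₀, f, hf, β, hsteps⟩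
    obtain ⟨n, hn⟩ := steps_stepN hsteps
    obtain ⟨r, hrf, hsteps'⟩ := tot_fwd (p₀ := s₀) Relation.ReflTransGen.refl hn
    exact ⟨some s₀, Or.inl ⟨s₀, hs₀, rfl⟩, some r, ⟨r, f, rfl, hf, hrf⟩,
      β.map some, hsteps'⟩

lemma tot_init_nonempty (M : VPA A kind) : (tot M).init.Nonempty := by
  by_cases h : M.init.Nonempty
  · obtain ⟨s, hs⟩ := h
    exact ⟨some s, Or.inl ⟨s, hs, rfl⟩⟩
  · exact ⟨none, Or.inr ⟨rfl, h⟩⟩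

end VPA
namespace VPA

variable {A : Type} {kind : A → VPKind}

/-- In a deterministic VPA, ε-closure endpoints with outgoing (non-ε) transitions
are unique. -/
lemma ER_unique {M : VPA A kind} (hd : M.Deterministic) {p q₁ q₂ : M.State}
    (h1 : M.ER p q₁) (h2 : M.ER p q₂)
    (t1 : (∃ a Z q, (q₁, a, Z, q) ∈ M.pushT) ∨ (∃ a Z q, (q₁, a, Z, q) ∈ M.popT) ∨
      (∃ a q, (q₁, some a, q) ∈ M.intT))
    (t2 : (∃ a Z q, (q₂, a, Z, q) ∈ M.pushT) ∨ (∃ a Z q, (q₂, a, Z, q) ∈ M.popT) ∨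
      (∃ a q, (q₂, some a, q) ∈ M.intT)) : q₁ = q₂ :=
  rtg_unique (fun a b c hb hc => hd.2.2.2.1 a none b c hb hc) h1 h2
    (fun x => hd.2.2.2.2 q₁ x t1) (fun x => hd.2.2.2.2 q₂ x t2)

lemma tot_det {M : VPA A kind} (hd : M.Deterministic) : (tot M).Deterministic := by
  refine ⟨?_, ?_, ?_, ?_, ?_⟩
  · rintro x (⟨p, hp, rfl⟩ | ⟨rfl, hni⟩) y hy
    · rcases hy with ⟨q, hq, rfl⟩ | ⟨rfl, hni⟩
      · rw [hd.1 hp hq]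
      · exact absurd ⟨p, hp⟩ hni
    · rcases hy with ⟨q, hq, rfl⟩ | ⟨rfl, _⟩
      · exact absurd ⟨q, hq⟩ hni
      · rfl
  · rintro s a Z₁ r₁ Z₂ r₂ h₁ h₂
    rcases h₁ with ⟨p₁, p'₁, Z'₁, q'₁, hER₁, ho₁, hs₁, hZ₁, hr₁⟩ | ⟨_, hnc₁, hZ₁, hr₁⟩
    · rcases h₂ with ⟨p₂, p'₂, Z'₂, q'₂, hER₂, ho₂, hs₂, hZ₂, hr₂⟩ | ⟨_, hnc₂, _, _⟩
      · rw [hs₁] at hs₂; injection hs₂ with hs₂; subst hs₂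
        have hp' : p'₁ = p'₂ := ER_unique hd hER₁ hER₂
          (Or.inl ⟨_, _, _, ho₁⟩) (Or.inl ⟨_, _, _, ho₂⟩)
        subst hp'
        obtain ⟨hZ', hq'⟩ := hd.2.1 p'₁ a Z'₁ q'₁ Z'₂ q'₂ ho₁ ho₂
        subst hZ'; subst hq'
        exact ⟨hZ₁.trans hZ₂.symm, hr₁.trans hr₂.symm⟩
      · exact absurd ⟨p₁, p'₁, Z'₁, q'₁, hs₁, hER₁, ho₁⟩ hnc₂
    · rcases h₂ with ⟨p₂, p'₂, Z'₂, q'₂, hER₂, ho₂, hs₂, hZ₂, hr₂⟩ | ⟨_, _, hZ₂, hr₂⟩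
      · exact absurd ⟨p₂, p'₂, Z'₂, q'₂, hs₂, hER₂, ho₂⟩ hnc₁
      · exact ⟨hZ₁.trans hZ₂.symm, hr₁.trans hr₂.symm⟩
  · rintro s a t r₁ r₂ h₁ h₂
    rcases h₁ with ⟨p₁, p'₁, q'₁, hER₁, hm₁, hs₁, hr₁⟩ | ⟨_, hnc₁, hr₁⟩
    · rcases h₂ with ⟨p₂, p'₂, q'₂, hER₂, hm₂, hs₂, hr₂⟩ | ⟨_, hnc₂, _⟩
      · rw [hs₁] at hs₂; injection hs₂ with hs₂; subst hs₂
        have ht₁ : ∃ Z q, (p'₁, a, Z, q) ∈ M.popT := by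
          rcases t with _ | _ | W
          · exact ⟨none, q'₁, hm₁⟩
          · exact hm₁.elim
          · exact ⟨some W, q'₁, hm₁⟩
        have ht₂ : ∃ Z q, (p'₂, a, Z, q) ∈ M.popT := by
          rcases t with _ | _ | W
          · exact ⟨none, q'₂, hm₂⟩
          · exact hm₂.elim
          · exact ⟨some W, q'₂, hm₂⟩
        have hp' : p'₁ = p'₂ := ER_unique hd hER₁ hER₂
          (Or.inr (Or.inl ⟨a, ht₁.choose, ht₁.choose_spec.choose, ht₁.choose_spec.choose_spec⟩))
          (Or.inr (Or.inl ⟨a, ht₂.choose, ht₂.choose_spec.choose, ht₂.choose_spec.choose_spec⟩))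
        subst hp'
        have hq' : q'₁ = q'₂ := by
          rcases t with _ | _ | W
          · exact hd.2.2.1 p'₁ a none q'₁ q'₂ hm₁ hm₂
          · exact hm₁.elim
          · exact hd.2.2.1 p'₁ a (some W) q'₁ q'₂ hm₁ hm₂
        exact hr₁.trans (by rw [hq']; exact hr₂.symm)
      · exact absurd ⟨p₁, p'₁, q'₁, hs₁, hER₁, hm₁⟩ hnc₂
    · rcases h₂ with ⟨p₂, p'₂, q'₂, hER₂, hm₂, hs₂, hr₂⟩ | ⟨_, _, hr₂⟩
      · exact absurd ⟨p₂, p'₂, q'₂, hs₂, hER₂, hm₂⟩ hnc₁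
      · exact hr₁.trans hr₂.symm
  · rintro s x r₁ r₂ ⟨a₁, hx₁, h₁⟩ ⟨a₂, hx₂, h₂⟩
    rw [hx₁] at hx₂; injection hx₂ with hx₂; subst hx₂
    rcases h₁ with ⟨p₁, p'₁, q'₁, hER₁, ho₁, hs₁, hr₁⟩ | ⟨_, hnc₁, hr₁⟩
    · rcases h₂ with ⟨p₂, p'₂, q'₂, hER₂, ho₂, hs₂, hr₂⟩ | ⟨_, hnc₂, _⟩
      · rw [hs₁] at hs₂; injection hs₂ with hs₂; subst hs₂
        have hp' : p'₁ = p'₂ := ER_unique hd hER₁ hER₂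
          (Or.inr (Or.inr ⟨a₁, q'₁, ho₁⟩)) (Or.inr (Or.inr ⟨a₁, q'₂, ho₂⟩))
        subst hp'
        have hq' : q'₁ = q'₂ := hd.2.2.2.1 p'₁ (some a₁) q'₁ q'₂ ho₁ ho₂
        exact hr₁.trans (by rw [hq']; exact hr₂.symm)
      · exact absurd ⟨p₁, p'₁, q'₁, hs₁, hER₁, ho₁⟩ hnc₂
    · rcases h₂ with ⟨p₂, p'₂, q'₂, hER₂, ho₂, hs₂, hr₂⟩ | ⟨_, _, hr₂⟩
      · exact absurd ⟨p₂, p'₂, q'₂, hs₂, hER₂, ho₂⟩ hnc₁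
      · exact hr₁.trans hr₂.symm
  · intro p q' _
    exact tot_noEps M p q'

end VPA
namespace VPA

variable {A : Type} {kind : A → VPKind}

/-! ### Step inversion by letter kind -/

lemma step_push_of_call {M : VPA A kind} {p t : M.State} {a : A} {σ : List A}
    {α β : List M.Stack} (hk : kind a = VPKind.call)
    (h : M.Step (p, a :: σ, α) (t, σ, β)) :
    ∃ Z, (p, a, Z, t) ∈ M.pushT ∧ β = Z :: α := by
  cases h with
  | push h' => exact ⟨_, h', rfl⟩
  | pop h' => have := M.pop_ret _ _ _ _ h'; rw [hk] at this; simp at this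
  | popEmpty h' => have := M.pop_ret _ _ _ _ h'; rw [hk] at this; simp at this
  | int h' => have := M.int_simple _ _ _ h'; rw [hk] at this; simp at this

lemma step_pop_of_ret_nil {M : VPA A kind} {p t : M.State} {a : A} {σ : List A}
    {β : List M.Stack} (hk : kind a = VPKind.ret)
    (h : M.Step (p, a :: σ, []) (t, σ, β)) :
    (p, a, none, t) ∈ M.popT ∧ β = [] := by
  cases h with
  | push h' => have := M.push_call _ _ _ _ h'; rw [hk] at this; simp at this
  | popEmpty h' => exact ⟨h', rfl⟩
  | int h' => have := M.int_simple _ _ _ h'; rw [hk] at this; simp at this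

lemma step_pop_of_ret_cons {M : VPA A kind} {p t : M.State} {a : A} {σ : List A}
    {Z : M.Stack} {α β : List M.Stack} (hk : kind a = VPKind.ret)
    (h : M.Step (p, a :: σ, Z :: α) (t, σ, β)) :
    (p, a, some Z, t) ∈ M.popT ∧ β = α := by
  cases h with
  | push h' => have := M.push_call _ _ _ _ h'; rw [hk] at this; simp at this
  | pop h' => exact ⟨h', rfl⟩
  | int h' => have := M.int_simple _ _ _ h'; rw [hk] at this; simp at this

lemma step_int_of_intern {M : VPA A kind} {p t : M.State} {a : A} {σ : List A}
    {α β : List M.Stack} (hk : kind a = VPKind.intern)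
    (h : M.Step (p, a :: σ, α) (t, σ, β)) :
    (p, some a, t) ∈ M.intT ∧ β = α := by
  cases h with
  | push h' => have := M.push_call _ _ _ _ h'; rw [hk] at this; simp at this
  | pop h' => have := M.pop_ret _ _ _ _ h'; rw [hk] at this; simp at this
  | popEmpty h' => have := M.pop_ret _ _ _ _ h'; rw [hk] at this; simp at this
  | int h' => exact ⟨h', rfl⟩

lemma steps_nil {M : VPA A kind} (hne : M.NoEps) {p : M.State} {α : List M.Stack}
    {c : M.Conf} (h : M.Steps (p, [], α) c) : c = (p, [], α) := by
  rcases h.cases_head with heq | ⟨d, hstep, _⟩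
  · exact heq.symm
  · cases hstep with
    | eps h' => exact absurd h' (hne _ _)

lemma steps_cons_decomp {M : VPA A kind} (hne : M.NoEps) {p q : M.State} {a : A}
    {σ : List A} {α γ : List M.Stack}
    (h : M.Steps (p, a :: σ, α) (q, [], γ)) :
    ∃ t β, M.Step (p, a :: σ, α) (t, σ, β) ∧ M.Steps (t, σ, β) (q, [], γ) := by
  rcases h.cases_head with heq | ⟨d, hstep, hrest⟩
  · exact absurd (congrArg (fun c => c.2.1) heq) (by simp)
  · cases hstep with
    | push h' => exact ⟨_, _, Step.push h', hrest⟩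
    | pop h' => exact ⟨_, _, Step.pop h', hrest⟩
    | popEmpty h' => exact ⟨_, _, Step.popEmpty h', hrest⟩
    | int h' => exact ⟨_, _, Step.int h', hrest⟩
    | eps h' => exact absurd h' (hne _ _)

/-! ### The union product -/

def uprod (M N : VPA A kind) : VPA A kind :=
  { M.prod N with final := { x : (M.prod N).State | x.1 ∈ M.final ∨ x.2 ∈ N.final } }

lemma uprod_noEps (M N : VPA A kind) (hM : M.NoEps) (hN : N.NoEps) :
    (uprod M N).NoEps := by
  rintro p q (⟨_, h2⟩ | ⟨_, h2⟩)
  · exact absurd h2 (hN _ _)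
  · exact absurd h2 (hM _ _)

lemma uprod_total {M N : VPA A kind} (hM : M.Total) (hN : N.Total)
    (hMe : M.NoEps) (hNe : N.NoEps) : (uprod M N).Total := by
  rintro ⟨s₁, s₂⟩ a σ α
  rcases hk : kind a with _ | _ | _
  · obtain ⟨t₁, β₁, st₁⟩ := hM s₁ a σ (α.map Prod.fst)
    obtain ⟨t₂, β₂, st₂⟩ := hN s₂ a σ (α.map Prod.snd)
    obtain ⟨Z₁, m₁, _⟩ := step_push_of_call hk st₁
    obtain ⟨Z₂, m₂, _⟩ := step_push_of_call hk st₂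
    have hmem : ((s₁, s₂), a, ((Z₁, Z₂) : (uprod M N).Stack), (t₁, t₂))
        ∈ (uprod M N).pushT := ⟨m₁, m₂⟩
    exact ⟨(t₁, t₂), (Z₁, Z₂) :: α, Step.push hmem⟩
  · cases α with
    | nil =>
      obtain ⟨t₁, β₁, st₁⟩ := hM s₁ a σ []
      obtain ⟨t₂, β₂, st₂⟩ := hN s₂ a σ []
      obtain ⟨m₁, _⟩ := step_pop_of_ret_nil hk st₁
      obtain ⟨m₂, _⟩ := step_pop_of_ret_nil hk st₂
      have hmem : ((s₁, s₂), a, (none : Option (uprod M N).Stack), (t₁, t₂))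
          ∈ (uprod M N).popT := ⟨m₁, m₂⟩
      exact ⟨(t₁, t₂), [], Step.popEmpty hmem⟩
    | cons Z α' =>
      obtain ⟨t₁, β₁, st₁⟩ := hM s₁ a σ (Z.1 :: α'.map Prod.fst)
      obtain ⟨t₂, β₂, st₂⟩ := hN s₂ a σ (Z.2 :: α'.map Prod.snd)
      obtain ⟨m₁, _⟩ := step_pop_of_ret_cons hk st₁
      obtain ⟨m₂, _⟩ := step_pop_of_ret_cons hk st₂
      have hmem : ((s₁, s₂), a, some (Z : (uprod M N).Stack), (t₁, t₂))
          ∈ (uprod M N).popT := ⟨m₁, m₂⟩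
      exact ⟨(t₁, t₂), α', Step.pop hmem⟩
  · obtain ⟨t₁, β₁, st₁⟩ := hM s₁ a σ (α.map Prod.fst)
    obtain ⟨t₂, β₂, st₂⟩ := hN s₂ a σ (α.map Prod.snd)
    obtain ⟨m₁, _⟩ := step_int_of_intern hk st₁
    obtain ⟨m₂, _⟩ := step_int_of_intern hk st₂
    have hmem : (((s₁, s₂) : (uprod M N).State), some a, (t₁, t₂))
        ∈ (uprod M N).intT := ⟨m₁, m₂⟩
    exact ⟨(t₁, t₂), α, Step.int hmem⟩

lemma uprod_proj1 {M N : VPA A kind} (hM : M.NoEps) (hN : N.NoEps) :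
    ∀ {n : ℕ} {c c' : (uprod M N).Conf}, (uprod M N).StepN n c c' →
      M.Steps (c.1.1, c.2.1, c.2.2.map Prod.fst) (c'.1.1, c'.2.1, c'.2.2.map Prod.fst) := by
  intro n
  induction n with
  | zero => rintro c c' rfl; exact Relation.ReflTransGen.refl
  | succ n ih =>
    rintro c c' ⟨d, hd, hn⟩
    refine Relation.ReflTransGen.trans ?_ (ih hn)
    cases hd with
    | push h => exact Relation.ReflTransGen.single (Step.push h.1)
    | pop h => exact Relation.ReflTransGen.single (Step.pop h.1)
    | popEmpty h => exact Relation.ReflTransGen.single (Step.popEmpty h.1)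
    | int h => exact Relation.ReflTransGen.single (Step.int h.1)
    | eps h =>
      rcases h with ⟨_, h2⟩ | ⟨_, h2⟩
      · exact absurd h2 (hN _ _)
      · exact absurd h2 (hM _ _)

lemma uprod_proj2 {M N : VPA A kind} (hM : M.NoEps) (hN : N.NoEps) :
    ∀ {n : ℕ} {c c' : (uprod M N).Conf}, (uprod M N).StepN n c c' →
      N.Steps (c.1.2, c.2.1, c.2.2.map Prod.snd) (c'.1.2, c'.2.1, c'.2.2.map Prod.snd) := by
  intro n
  induction n with
  | zero => rintro c c' rfl; exact Relation.ReflTransGen.refl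
  | succ n ih =>
    rintro c c' ⟨d, hd, hn⟩
    refine Relation.ReflTransGen.trans ?_ (ih hn)
    cases hd with
    | push h => exact Relation.ReflTransGen.single (Step.push h.2)
    | pop h => exact Relation.ReflTransGen.single (Step.pop h.2)
    | popEmpty h => exact Relation.ReflTransGen.single (Step.popEmpty h.2)
    | int h => exact Relation.ReflTransGen.single (Step.int h.2)
    | eps h =>
      rcases h with ⟨_, h2⟩ | ⟨_, h2⟩
      · exact absurd h2 (hN _ _)
      · exact absurd h2 (hM _ _)

lemma uprod_pair {M N : VPA A kind} (hM : M.NoEps) (hN : N.NoEps) :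
    ∀ (σ : List A) (p : M.State) (q : N.State) (γ : List (M.Stack × N.Stack))
      (p' : M.State) (β₁ : List M.Stack) (q' : N.State) (β₂ : List N.Stack),
      M.Steps (p, σ, γ.map Prod.fst) (p', [], β₁) →
      N.Steps (q, σ, γ.map Prod.snd) (q', [], β₂) →
      ∃ δ, (uprod M N).Steps ((p, q), σ, γ) ((p', q'), [], δ) := by
  intro σ
  induction σ with
  | nil =>
    intro p q γ p' β₁ q' β₂ h₁ h₂
    have e₁ := steps_nil hM h₁
    have e₂ := steps_nil hN h₂
    injection e₁ with e₁ _; injection e₂ with e₂ _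
    subst e₁; subst e₂
    exact ⟨γ, Relation.ReflTransGen.refl⟩
  | cons a σ ih =>
    intro p q γ p' β₁ q' β₂ h₁ h₂
    obtain ⟨t₁, δ₁, st₁, rest₁⟩ := steps_cons_decomp hM h₁
    obtain ⟨t₂, δ₂, st₂, rest₂⟩ := steps_cons_decomp hN h₂
    rcases hk : kind a with _ | _ | _
    · obtain ⟨Z₁, m₁, rfl⟩ := step_push_of_call hk st₁
      obtain ⟨Z₂, m₂, rfl⟩ := step_push_of_call hk st₂
      obtain ⟨δ, hsteps⟩ := ih t₁ t₂ ((Z₁, Z₂) :: γ) p' β₁ q' β₂ rest₁ rest₂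
      have hmem : ((p, q), a, ((Z₁, Z₂) : (uprod M N).Stack), (t₁, t₂))
          ∈ (uprod M N).pushT := ⟨m₁, m₂⟩
      exact ⟨δ, Relation.ReflTransGen.head (Step.push hmem) hsteps⟩
    · cases γ with
      | nil =>
        obtain ⟨m₁, rfl⟩ := step_pop_of_ret_nil hk st₁
        obtain ⟨m₂, rfl⟩ := step_pop_of_ret_nil hk st₂
        obtain ⟨δ, hsteps⟩ := ih t₁ t₂ [] p' β₁ q' β₂ rest₁ rest₂
        have hmem : ((p, q), a, (none : Option (uprod M N).Stack), (t₁, t₂))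
            ∈ (uprod M N).popT := ⟨m₁, m₂⟩
        exact ⟨δ, Relation.ReflTransGen.head (Step.popEmpty hmem) hsteps⟩
      | cons Z γ' =>
        obtain ⟨m₁, rfl⟩ := step_pop_of_ret_cons hk st₁
        obtain ⟨m₂, rfl⟩ := step_pop_of_ret_cons hk st₂
        obtain ⟨δ, hsteps⟩ := ih t₁ t₂ γ' p' β₁ q' β₂ rest₁ rest₂
        have hmem : ((p, q), a, some (Z : (uprod M N).Stack), (t₁, t₂))
            ∈ (uprod M N).popT := ⟨m₁, m₂⟩
        exact ⟨δ, Relation.ReflTransGen.head (Step.pop hmem) hsteps⟩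
    · obtain ⟨m₁, rfl⟩ := step_int_of_intern hk st₁
      obtain ⟨m₂, rfl⟩ := step_int_of_intern hk st₂
      obtain ⟨δ, hsteps⟩ := ih t₁ t₂ γ p' β₁ q' β₂ rest₁ rest₂
      have hmem : (((p, q) : (uprod M N).State), some a, (t₁, t₂))
          ∈ (uprod M N).intT := ⟨m₁, m₂⟩
      exact ⟨δ, Relation.ReflTransGen.head (Step.int hmem) hsteps⟩

end VPA
namespace VPA

variable {A : Type} {kind : A → VPKind}

lemma uprod_det {M N : VPA A kind} (hM : M.Deterministic) (hN : N.Deterministic)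
    (hMe : M.NoEps) (hNe : N.NoEps) : (uprod M N).Deterministic := by
  refine ⟨?_, ?_, ?_, ?_, ?_⟩
  · rintro ⟨x₁, x₂⟩ ⟨hx₁, hx₂⟩ ⟨y₁, y₂⟩ ⟨hy₁, hy₂⟩
    exact Prod.ext (hM.1 hx₁ hy₁) (hN.1 hx₂ hy₂)
  · rintro ⟨s₁, s₂⟩ a ⟨Z₁, Z₂⟩ ⟨r₁, r₂⟩ ⟨W₁, W₂⟩ ⟨u₁, u₂⟩ ⟨h₁, h₂⟩ ⟨g₁, g₂⟩
    obtain ⟨eZ₁, er₁⟩ := hM.2.1 s₁ a Z₁ r₁ W₁ u₁ h₁ g₁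
    obtain ⟨eZ₂, er₂⟩ := hN.2.1 s₂ a Z₂ r₂ W₂ u₂ h₂ g₂
    exact ⟨Prod.ext eZ₁ eZ₂, Prod.ext er₁ er₂⟩
  · rintro ⟨s₁, s₂⟩ a t ⟨r₁, r₂⟩ ⟨u₁, u₂⟩ h g
    cases t with
    | none =>
      obtain ⟨h₁, h₂⟩ := h; obtain ⟨g₁, g₂⟩ := g
      exact Prod.ext (hM.2.2.1 s₁ a none r₁ u₁ h₁ g₁) (hN.2.2.1 s₂ a none r₂ u₂ h₂ g₂)
    | some Z =>
      obtain ⟨h₁, h₂⟩ := h; obtain ⟨g₁, g₂⟩ := g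
      exact Prod.ext (hM.2.2.1 s₁ a (some Z.1) r₁ u₁ h₁ g₁)
        (hN.2.2.1 s₂ a (some Z.2) r₂ u₂ h₂ g₂)
  · rintro ⟨s₁, s₂⟩ a ⟨r₁, r₂⟩ ⟨u₁, u₂⟩ h g
    cases a with
    | none => exact absurd h (uprod_noEps M N hMe hNe _ _)
    | some a =>
      obtain ⟨h₁, h₂⟩ := h; obtain ⟨g₁, g₂⟩ := g
      exact Prod.ext (hM.2.2.2.1 s₁ (some a) r₁ u₁ h₁ g₁)
        (hN.2.2.2.1 s₂ (some a) r₂ u₂ h₂ g₂)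
  · intro p q' _
    exact uprod_noEps M N hMe hNe p q'

lemma uprod_lang {M N : VPA A kind} (hM : M.NoEps) (hN : N.NoEps)
    (hMne : M.init.Nonempty) (hNne : N.init.Nonempty)
    (hMt : M.Total) (hNt : N.Total) :
    (uprod M N).Lang = M.Lang ∪ N.Lang := by
  ext σ
  constructor
  · rintro ⟨⟨s, t⟩, ⟨hs, ht⟩, ⟨p, q⟩, hfin, β, hsteps⟩
    obtain ⟨n, hn⟩ := steps_stepN hsteps
    rcases hfin with hp | hq
    · exact Or.inl ⟨s, hs, p, hp, β.map Prod.fst, uprod_proj1 hM hN hn⟩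
    · exact Or.inr ⟨t, ht, q, hq, β.map Prod.snd, uprod_proj2 hM hN hn⟩
  · rintro (⟨s, hs, p, hp, β, hsteps⟩ | ⟨t, ht, q, hq, β, hsteps⟩)
    · obtain ⟨t₀, ht₀⟩ := hNne
      obtain ⟨q, β₂, hsteps₂⟩ := total_nonBlocking hNt t₀ σ []
      obtain ⟨δ, hps⟩ := uprod_pair hM hN σ s t₀ [] p β q β₂ hsteps hsteps₂
      exact ⟨(s, t₀), ⟨hs, ht₀⟩, (p, q), Or.inl hp, δ, hps⟩
    · obtain ⟨s₀, hs₀⟩ := hMne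
      obtain ⟨p, β₁, hsteps₁⟩ := total_nonBlocking hMt s₀ σ []
      obtain ⟨δ, hps⟩ := uprod_pair hM hN σ s₀ t [] p β₁ q β hsteps₁ hsteps
      exact ⟨(s₀, t), ⟨hs₀, ht⟩, (p, q), Or.inr hq, δ, hps⟩

end VPA
/-- VPLs are closed under union: there is a non-blocking VPA with at
most `(n+1)(m+1)` states accepting `L(S) ∪ L(Q)`, which is deterministic and has no
ε-transitions whenever both components are deterministic. -/
theorem vpa_union {A : Type} {kind : A → VPKind} (M N : VPA A kind) :
    ∃ P : VPA A kind, P.NonBlocking ∧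
      Fintype.card P.State ≤ (Fintype.card M.State + 1) * (Fintype.card N.State + 1) ∧
      P.Lang = M.Lang ∪ N.Lang ∧
      (M.Deterministic → N.Deterministic → P.Deterministic ∧ P.NoEps) := by
  refine ⟨VPA.uprod (VPA.tot M) (VPA.tot N), ?_, ?_, ?_, ?_⟩
  · exact VPA.total_nonBlocking
      (VPA.uprod_total (VPA.tot_total M) (VPA.tot_total N) (VPA.tot_noEps M) (VPA.tot_noEps N))
  · have h : Fintype.card (VPA.uprod (VPA.tot M) (VPA.tot N)).State =
        Fintype.card (Option M.State × Option N.State) :=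
      Fintype.card_congr (Equiv.refl _)
    rw [h, Fintype.card_prod, Fintype.card_option, Fintype.card_option]
  · rw [VPA.uprod_lang (VPA.tot_noEps M) (VPA.tot_noEps N)
      (VPA.tot_init_nonempty M) (VPA.tot_init_nonempty N)
      (VPA.tot_total M) (VPA.tot_total N), VPA.tot_lang, VPA.tot_lang]
  · intro hM hN
    exact ⟨VPA.uprod_det (VPA.tot_det hM) (VPA.tot_det hN) (VPA.tot_noEps M) (VPA.tot_noEps N),
      VPA.uprod_noEps _ _ (VPA.tot_noEps M) (VPA.tot_noEps N)⟩
end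

section
/- Let S be a deterministic VPA over an alphabet A with n states. Then there exists a non-blocking, deterministic VPA Q over A with no ε-transitions and n+1 states such that L(Q) is the complement A* − L(S). In particular, deterministic visibly pushdown languages are closed under complementation. -/
section VPAComplement

open Classical

namespace VPA

variable {A : Type} {kind : A → VPKind}

/-- one ε-step -/
def epsR (M : VPA A kind) (p q : M.State) : Prop := (p, (none : Option A), q) ∈ M.intT

/-- ε-reachability -/
def Eps (M : VPA A kind) : M.State → M.State → Prop := Relation.ReflTransGen (M.epsR)

def stable (M : VPA A kind) (p : M.State) : Prop := ∀ q, ¬ M.epsR p q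

variable {M : VPA A kind}

lemma eps_det (hdet : M.Deterministic) {p q₁ q₂ : M.State}
    (h₁ : M.epsR p q₁) (h₂ : M.epsR p q₂) : q₁ = q₂ :=
  hdet.2.2.2.1 p none q₁ q₂ h₁ h₂

lemma eps_steps {p q : M.State} (h : M.Eps p q) (σ : List A) (α : List M.Stack) :
    M.Steps (p, σ, α) (q, σ, α) := by
  induction h with
  | refl => exact Relation.ReflTransGen.refl
  | tail _ hbc ih => exact ih.tail (Step.eps hbc)

lemma eps_unique (hdet : M.Deterministic) :
    ∀ {p q₁ : M.State}, M.Eps p q₁ → M.stable q₁ →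
      ∀ {q₂ : M.State}, M.Eps p q₂ → M.stable q₂ → q₁ = q₂ := by
  intro p q₁ h
  induction h using Relation.ReflTransGen.head_induction_on with
  | refl =>
    intro hs₁ q₂ h₂ hs₂
    rcases Relation.ReflTransGen.cases_head h₂ with h' | ⟨c, hc, _⟩
    · exact h'
    · exact absurd hc (hs₁ _)
  | head hpr hrq₁ ih =>
    intro hs₁ q₂ h₂ hs₂
    rcases Relation.ReflTransGen.cases_head h₂ with h' | ⟨c, hc, hcq₂⟩
    · subst h'; exact absurd hpr (hs₂ _)
    · cases eps_det hdet hpr hc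
      exact ih hs₁ hcq₂ hs₂

noncomputable def cl (M : VPA A kind) (p : M.State) : Option M.State :=
  if h : ∃ q, M.Eps p q ∧ M.stable q then some h.choose else none

lemma cl_spec {p q : M.State} (h : M.cl p = some q) : M.Eps p q ∧ M.stable q := by
  unfold cl at h
  split at h
  · next h' =>
    injection h with h
    exact h ▸ h'.choose_spec
  · exact absurd h (by simp)

lemma cl_eq_some (hdet : M.Deterministic) {p q : M.State}
    (h1 : M.Eps p q) (h2 : M.stable q) : M.cl p = some q := by
  unfold cl
  rw [dif_pos ⟨q, h1, h2⟩]
  have hc := (Exists.intro q ⟨h1, h2⟩ : ∃ q, M.Eps p q ∧ M.stable q).choose_spec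
  exact congrArg some (eps_unique hdet hc.1 hc.2 h1 h2)

lemma cl_none {p : M.State} (h : M.cl p = none) : ¬ ∃ q, M.Eps p q ∧ M.stable q := by
  unfold cl at h
  split at h
  · exact absurd h (by simp)
  · next h' => exact h'

lemma stable_cl (hdet : M.Deterministic) {p : M.State} (h : M.stable p) :
    M.cl p = some p := cl_eq_some hdet Relation.ReflTransGen.refl h

lemma cl_eps (hdet : M.Deterministic) {p r : M.State} (h : M.epsR p r) :
    M.cl p = M.cl r := by
  cases hcr : M.cl r with
  | some q =>
    obtain ⟨h1, h2⟩ := cl_spec hcr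
    exact cl_eq_some hdet (Relation.ReflTransGen.head h h1) h2
  | none =>
    cases hcp : M.cl p with
    | none => rfl
    | some q =>
      obtain ⟨he, hs⟩ := cl_spec hcp
      rcases Relation.ReflTransGen.cases_head he with h' | ⟨c, hc, hcq⟩
      · subst h'; exact absurd h (hs _)
      · cases eps_det hdet h hc
        exact absurd ⟨q, hcq, hs⟩ (cl_none hcr)

lemma stable_of_push (hdet : M.Deterministic) {p : M.State} {a : A} {Z : M.Stack}
    {q : M.State} (h : (p, a, Z, q) ∈ M.pushT) : M.stable p :=
  fun q' hq' => hdet.2.2.2.2 p q' (Or.inl ⟨a, Z, q, h⟩) hq'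

lemma stable_of_pop (hdet : M.Deterministic) {p : M.State} {a : A} {Z : Option M.Stack}
    {q : M.State} (h : (p, a, Z, q) ∈ M.popT) : M.stable p :=
  fun q' hq' => hdet.2.2.2.2 p q' (Or.inr (Or.inl ⟨a, Z, q, h⟩)) hq'

lemma stable_of_int (hdet : M.Deterministic) {p : M.State} {a : A}
    {q : M.State} (h : (p, some a, q) ∈ M.intT) : M.stable p :=
  fun q' hq' => hdet.2.2.2.2 p q' (Or.inr (Or.inr ⟨a, q, h⟩)) hq'

noncomputable def pushF (M : VPA A kind) (q : M.State) (a : A) : Option (M.Stack × M.State) :=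
  if h : ∃ t : M.Stack × M.State, (q, a, t.1, t.2) ∈ M.pushT then some h.choose else none

lemma pushF_mem {q : M.State} {a : A} {Z : M.Stack} {q' : M.State}
    (h : M.pushF q a = some (Z, q')) : (q, a, Z, q') ∈ M.pushT := by
  unfold pushF at h
  split at h
  · next h' =>
    injection h with h
    have := h'.choose_spec
    rw [h] at this; exact this
  · exact absurd h (by simp)

lemma pushF_eq (hdet : M.Deterministic) {q : M.State} {a : A} {Z : M.Stack} {q' : M.State}
    (h : (q, a, Z, q') ∈ M.pushT) : M.pushF q a = some (Z, q') := by
  unfold pushF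
  rw [dif_pos ⟨(Z, q'), h⟩]
  have hc := (Exists.intro (Z, q') h : ∃ t : M.Stack × M.State, (q, a, t.1, t.2) ∈ M.pushT).choose_spec
  obtain ⟨h1, h2⟩ := hdet.2.1 q a _ _ _ _ hc h
  congr 1
  exact Prod.ext h1 h2

noncomputable def popF (M : VPA A kind) (q : M.State) (a : A) (Z : Option M.Stack) :
    Option M.State :=
  if h : ∃ q', (q, a, Z, q') ∈ M.popT then some h.choose else none

lemma popF_mem {q : M.State} {a : A} {Z : Option M.Stack} {q' : M.State}
    (h : M.popF q a Z = some q') : (q, a, Z, q') ∈ M.popT := by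
  unfold popF at h
  split at h
  · next h' => injection h with h; exact h ▸ h'.choose_spec
  · exact absurd h (by simp)

lemma popF_eq (hdet : M.Deterministic) {q : M.State} {a : A} {Z : Option M.Stack} {q' : M.State}
    (h : (q, a, Z, q') ∈ M.popT) : M.popF q a Z = some q' := by
  unfold popF
  rw [dif_pos ⟨q', h⟩]
  have hc := (Exists.intro q' h : ∃ q', (q, a, Z, q') ∈ M.popT).choose_spec
  exact congrArg some (hdet.2.2.1 q a Z _ _ hc h)

noncomputable def intF (M : VPA A kind) (q : M.State) (a : A) : Option M.State :=
  if h : ∃ q', (q, some a, q') ∈ M.intT then some h.choose else none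

lemma intF_mem {q : M.State} {a : A} {q' : M.State}
    (h : M.intF q a = some q') : (q, some a, q') ∈ M.intT := by
  unfold intF at h
  split at h
  · next h' => injection h with h; exact h ▸ h'.choose_spec
  · exact absurd h (by simp)

lemma intF_eq (hdet : M.Deterministic) {q : M.State} {a : A} {q' : M.State}
    (h : (q, some a, q') ∈ M.intT) : M.intF q a = some q' := by
  unfold intF
  rw [dif_pos ⟨q', h⟩]
  have hc := (Exists.intro q' h : ∃ q', (q, some a, q') ∈ M.intT).choose_spec
  exact congrArg some (hdet.2.2.2.1 q (some a) _ _ hc h)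

/-! ### The complement automaton's transition function -/

noncomputable def qpush (M : VPA A kind) : Option M.State → A → Option M.Stack × Option M.State
  | none, _ => (none, none)
  | some p, a =>
    match M.cl p with
    | none => (none, none)
    | some q =>
      match M.pushF q a with
      | none => (none, none)
      | some (Z, q') => (some Z, some q')

noncomputable def qpop (M : VPA A kind) :
    Option M.State → A → Option (Option M.Stack) → Option M.State
  | none, _, _ => none
  | some p, a, t =>
    match M.cl p with
    | none => none
    | some q =>
      match t with
      | none => M.popF q a none
      | some none => none
      | some (some Z) => M.popF q a (some Z)

noncomputable def qint (M : VPA A kind) : Option M.State → A → Option M.State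
  | none, _ => none
  | some p, a =>
    match M.cl p with
    | none => none
    | some q => M.intF q a

variable (kind) in
noncomputable def qd (M : VPA A kind) (s : Option M.State) (α : List (Option M.Stack)) (a : A) :
    Option M.State × List (Option M.Stack) :=
  match kind a with
  | VPKind.call => ((M.qpush s a).2, (M.qpush s a).1 :: α)
  | VPKind.ret =>
    match α with
    | [] => (M.qpop s a none, [])
    | Z :: rest => (M.qpop s a (some Z), rest)
  | VPKind.intern => (M.qint s a, α)

noncomputable def qrun (M : VPA A kind) :
    Option M.State → List (Option M.Stack) → List A → Option M.State × List (Option M.Stack)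
  | s, α, [] => (s, α)
  | s, α, a :: σ => M.qrun (qd kind M s α a).1 (qd kind M s α a).2 σ

/-! ### The (partial) deterministic run of `M` -/

variable (kind) in
noncomputable def mstep (M : VPA A kind) (q : M.State) (a : A) (β : List M.Stack) :
    Option (M.State × List M.Stack) :=
  match kind a with
  | VPKind.call => (M.pushF q a).map (fun t => (t.2, t.1 :: β))
  | VPKind.ret =>
    match β with
    | [] => (M.popF q a none).map (fun q' => (q', ([] : List M.Stack)))
    | Z :: rest => (M.popF q a (some Z)).map (fun q' => (q', rest))
  | VPKind.intern => (M.intF q a).map (fun q' => (q', β))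

noncomputable def mrun (M : VPA A kind) :
    M.State → List M.Stack → List A → Option (M.State × List M.Stack)
  | p, β, [] => some (p, β)
  | p, β, a :: σ =>
    match M.cl p with
    | none => none
    | some q =>
      match mstep kind M q a β with
      | none => none
      | some c => M.mrun c.1 c.2 σ

end VPA

end VPAComplement

namespace VPA
variable {A : Type} {kind : A → VPKind} {M : VPA A kind}

lemma qd_none (α : List (Option M.Stack)) (a : A) :
    (qd kind M none α a).1 = none := by
  unfold qd
  cases kind a with
  | call => simp [qpush]
  | ret => cases α <;> simp [qpop]
  | intern => simp [qint]

lemma qrun_none : ∀ (σ : List A) (α : List (Option M.Stack)),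
    (M.qrun none α σ).1 = none := by
  intro σ
  induction σ with
  | nil => intro α; rfl
  | cons a σ ih =>
    intro α
    show (M.qrun (qd kind M none α a).1 (qd kind M none α a).2 σ).1 = none
    rw [qd_none α a]
    exact ih _

lemma qd_cl_none {p : M.State} (h : M.cl p = none) (α : List (Option M.Stack)) (a : A) :
    (qd kind M (some p) α a).1 = none := by
  unfold qd
  cases kind a with
  | call => simp [qpush, h]
  | ret => cases α <;> simp [qpop, h]
  | intern => simp [qint, h]

lemma qd_mstep_some {p q : M.State} {a : A} {β : List M.Stack} {c : M.State × List M.Stack}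
    (hcl : M.cl p = some q) (h : mstep kind M q a β = some c) :
    qd kind M (some p) (β.map some) a = (some c.1, c.2.map some) := by
  unfold mstep at h
  unfold qd
  cases hk : kind a with
  | call =>
    rcases hpf : M.pushF q a with _ | ⟨Z, q'⟩
    · simp [hk, hpf] at h
    · simp only [hk, hpf, Option.map_some, Option.some.injEq] at h
      subst h
      simp [qpush, hcl, hpf]
  | ret =>
    cases β with
    | nil =>
      rcases hpf : M.popF q a none with _ | q'
      · simp [hk, hpf] at h
      · simp only [hk, hpf, Option.map_some, Option.some.injEq] at h
        subst h
        simp [qpop, hcl, hpf]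
    | cons Z rest =>
      rcases hpf : M.popF q a (some Z) with _ | q'
      · simp [hk, hpf] at h
      · simp only [hk, hpf, Option.map_some, Option.some.injEq] at h
        subst h
        simp [qpop, hcl, hpf]
  | intern =>
    rcases hpf : M.intF q a with _ | q'
    · simp [hk, hpf] at h
    · simp only [hk, hpf, Option.map_some, Option.some.injEq] at h
      subst h
      simp [qint, hcl, hpf]
lemma qd_mstep_none {p q : M.State} {a : A} {β : List M.Stack}
    (hcl : M.cl p = some q) (h : mstep kind M q a β = none) :
    (qd kind M (some p) (β.map some) a).1 = none := by
  unfold mstep at h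
  unfold qd
  cases hk : kind a with
  | call =>
    rcases hpf : M.pushF q a with _ | ⟨Z, q'⟩
    · simp [qpush, hcl, hpf]
    · simp [hk, hpf] at h
  | ret =>
    cases β with
    | nil =>
      rcases hpf : M.popF q a none with _ | q'
      · simp [qpop, hcl, hpf]
      · simp [hk, hpf] at h
    | cons Z rest =>
      rcases hpf : M.popF q a (some Z) with _ | q'
      · simp [qpop, hcl, hpf]
      · simp [hk, hpf] at h
  | intern =>
    rcases hpf : M.intF q a with _ | q'
    · simp [qint, hcl, hpf]
    · simp [hk, hpf] at h
lemma qrun_mrun_some (hdet : M.Deterministic) :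
    ∀ (σ : List A) (p : M.State) (β : List M.Stack) (c : M.State × List M.Stack),
      M.mrun p β σ = some c →
      M.qrun (some p) (β.map some) σ = (some c.1, c.2.map some) := by
  intro σ
  induction σ with
  | nil =>
    intro p β c h
    injection h with h
    subst h
    rfl
  | cons a σ ih =>
    intro p β c h
    unfold mrun at h
    rcases hcl : M.cl p with _ | q <;> simp only [hcl] at h
    · exact absurd h (by simp)
    · rcases hms : mstep kind M q a β with _ | c' <;> simp only [hms] at h
      · exact absurd h (by simp)
      · show M.qrun (qd kind M (some p) (β.map some) a).1 (qd kind M (some p) (β.map some) a).2 σ = _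
        rw [qd_mstep_some hcl hms]
        exact ih c'.1 c'.2 c h

lemma qrun_mrun_none (hdet : M.Deterministic) :
    ∀ (σ : List A) (p : M.State) (β : List M.Stack),
      M.mrun p β σ = none →
      (M.qrun (some p) (β.map some) σ).1 = none := by
  intro σ
  induction σ with
  | nil => intro p β h; exact absurd h (by simp [mrun])
  | cons a σ ih =>
    intro p β h
    unfold mrun at h
    show (M.qrun (qd kind M (some p) (β.map some) a).1 (qd kind M (some p) (β.map some) a).2 σ).1 = none
    rcases hcl : M.cl p with _ | q <;> simp only [hcl] at h
    · rw [qd_cl_none hcl]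
      exact qrun_none _ _
    · rcases hms : mstep kind M q a β with _ | c' <;> simp only [hms] at h
      · rw [qd_mstep_none hcl hms]
        exact qrun_none _ _
      · rw [qd_mstep_some hcl hms]
        exact ih c'.1 c'.2 h

/-! ### Characterizing accepting runs of `M` via `mrun` -/

lemma steps_mrun (hdet : M.Deterministic) {q : M.State} {γ : List M.Stack} :
    ∀ {c : M.Conf}, M.Steps c (q, [], γ) →
      ∃ p', M.mrun c.1 c.2.2 c.2.1 = some (p', γ) ∧ M.Eps p' q := by
  intro c h
  induction h using Relation.ReflTransGen.head_induction_on with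
  | refl => exact ⟨q, rfl, Relation.ReflTransGen.refl⟩
  | head hstep _ ih =>
    cases hstep with
    | @push p p₂ a Z σ α hmem =>
      obtain ⟨p', hm, he⟩ := ih
      refine ⟨p', ?_, he⟩
      have hst : M.stable p := stable_of_push hdet hmem
      have hk : kind a = VPKind.call := M.push_call _ _ _ _ hmem
      show M.mrun p α (a :: σ) = some (p', γ)
      unfold mrun
      simp only [stable_cl hdet hst]
      have : mstep kind M p a α = some (p₂, Z :: α) := by
        simp [mstep, hk, pushF_eq hdet hmem]
      simp only [this]
      exact hm
    | @pop p p₂ a Z σ α hmem =>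
      obtain ⟨p', hm, he⟩ := ih
      refine ⟨p', ?_, he⟩
      have hst : M.stable p := stable_of_pop hdet hmem
      have hk : kind a = VPKind.ret := M.pop_ret _ _ _ _ hmem
      show M.mrun p (Z :: α) (a :: σ) = some (p', γ)
      unfold mrun
      simp only [stable_cl hdet hst]
      have : mstep kind M p a (Z :: α) = some (p₂, α) := by
        simp [mstep, hk, popF_eq hdet hmem]
      simp only [this]
      exact hm
    | @popEmpty p p₂ a σ hmem =>
      obtain ⟨p', hm, he⟩ := ih
      refine ⟨p', ?_, he⟩
      have hst : M.stable p := stable_of_pop hdet hmem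
      have hk : kind a = VPKind.ret := M.pop_ret _ _ _ _ hmem
      show M.mrun p [] (a :: σ) = some (p', γ)
      unfold mrun
      simp only [stable_cl hdet hst]
      have : mstep kind M p a [] = some (p₂, []) := by
        simp [mstep, hk, popF_eq hdet hmem]
      simp only [this]
      exact hm
    | @int p p₂ a σ α hmem =>
      obtain ⟨p', hm, he⟩ := ih
      refine ⟨p', ?_, he⟩
      have hst : M.stable p := stable_of_int hdet hmem
      have hk : kind a = VPKind.intern := M.int_simple _ _ _ hmem
      show M.mrun p α (a :: σ) = some (p', γ)
      unfold mrun
      simp only [stable_cl hdet hst]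
      have : mstep kind M p a α = some (p₂, α) := by
        simp [mstep, hk, intF_eq hdet hmem]
      simp only [this]
      exact hm
    | @eps p p₂ σ α hmem =>
      obtain ⟨p', hm, he⟩ := ih
      cases σ with
      | nil =>
        simp only [mrun, Option.some.injEq, Prod.mk.injEq] at hm
        obtain ⟨rfl, rfl⟩ := hm
        exact ⟨p, rfl, Relation.ReflTransGen.head hmem he⟩
      | cons a σ' =>
        refine ⟨p', ?_, he⟩
        show M.mrun p α (a :: σ') = some (p', γ)
        unfold mrun
        rw [cl_eps hdet hmem]
        exact hm

lemma mrun_steps (hdet : M.Deterministic) :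
    ∀ (σ : List A) (p : M.State) (β : List M.Stack) (p' : M.State) (γ : List M.Stack),
      M.mrun p β σ = some (p', γ) → M.Steps (p, σ, β) (p', [], γ) := by
  intro σ
  induction σ with
  | nil =>
    intro p β p' γ h
    simp only [mrun, Option.some.injEq, Prod.mk.injEq] at h
    rw [h.1, h.2]
    exact Relation.ReflTransGen.refl
  | cons a σ ih =>
    intro p β p' γ h
    unfold mrun at h
    rcases hcl : M.cl p with _ | q <;> simp only [hcl] at h
    · exact absurd h (by simp)
    · rcases hms : mstep kind M q a β with _ | c' <;> simp only [hms] at h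
      · exact absurd h (by simp)
      · have h1 : M.Steps (p, a :: σ, β) (q, a :: σ, β) :=
          eps_steps (cl_spec hcl).1 _ _
        have h2 : M.Step (q, a :: σ, β) (c'.1, σ, c'.2) := by
          unfold mstep at hms
          cases hk : kind a with
          | call =>
            rcases hpf : M.pushF q a with _ | ⟨Z, q'⟩
            · simp [hk, hpf] at hms
            · simp only [hk, hpf, Option.map_some, Option.some.injEq] at hms
              subst hms
              exact Step.push (pushF_mem hpf)
          | ret =>
            cases β with
            | nil =>
              rcases hpf : M.popF q a none with _ | q'
              · simp [hk, hpf] at hms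
              · simp only [hk, hpf, Option.map_some, Option.some.injEq] at hms
                subst hms
                exact Step.popEmpty (popF_mem hpf)
            | cons Z rest =>
              rcases hpf : M.popF q a (some Z) with _ | q'
              · simp [hk, hpf] at hms
              · simp only [hk, hpf, Option.map_some, Option.some.injEq] at hms
                subst hms
                exact Step.pop (popF_mem hpf)
          | intern =>
            rcases hpf : M.intF q a with _ | q'
            · simp [hk, hpf] at hms
            · simp only [hk, hpf, Option.map_some, Option.some.injEq] at hms
              subst hms
              exact Step.int (intF_mem hpf)
        exact (h1.tail h2).trans (ih c'.1 c'.2 p' γ h)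

lemma mem_lang_iff_mrun (hdet : M.Deterministic) (σ : List A) :
    σ ∈ M.Lang ↔ ∃ s₀ ∈ M.init, ∃ p' γ, M.mrun s₀ [] σ = some (p', γ) ∧
      ∃ f ∈ M.final, M.Eps p' f := by
  constructor
  · rintro ⟨s₀, hs₀, f, hf, β, hsteps⟩
    obtain ⟨p', hm, he⟩ := steps_mrun hdet hsteps
    exact ⟨s₀, hs₀, p', β, hm, f, hf, he⟩
  · rintro ⟨s₀, hs₀, p', γ, hm, f, hf, he⟩
    exact ⟨s₀, hs₀, f, hf, γ, (mrun_steps hdet σ s₀ [] p' γ hm).trans (eps_steps he _ _)⟩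

end VPA

open Classical

namespace VPA
variable {A : Type} {kind : A → VPKind} {M : VPA A kind}

variable (M) in
def Fpred (s : Option M.State) : Prop :=
  ∀ p, s = some p → ¬ ∃ q, M.Eps p q ∧ q ∈ M.final

variable (M) in
noncomputable def qinit : Option M.State :=
  if h : M.init.Nonempty then some h.choose else none

variable (M) in
noncomputable def compl : VPA A kind where
  State := Option M.State
  Stack := Option M.Stack
  fintypeState := inferInstance
  init := {qinit M}
  final := {s | Fpred M s}
  pushT := {t | kind t.2.1 = VPKind.call ∧ M.qpush t.1 t.2.1 = (t.2.2.1, t.2.2.2)}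
  popT := {t | kind t.2.1 = VPKind.ret ∧ M.qpop t.1 t.2.1 t.2.2.1 = t.2.2.2}
  intT := {t | ∃ a, t.2.1 = some a ∧ kind a = VPKind.intern ∧ M.qint t.1 a = t.2.2}
  push_call := fun _ _ _ _ h => h.1
  pop_ret := fun _ _ _ _ h => h.1
  int_simple := by
    rintro p a q ⟨b, hb, hk, _⟩
    injection hb with hb
    exact hb ▸ hk

lemma compl_noEps : (compl M).NoEps := by
  rintro p q ⟨a, ha, _⟩
  exact absurd ha (by simp)

lemma compl_det : (compl M).Deterministic := by
  refine ⟨?_, ?_, ?_, ?_, ?_⟩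
  · intro x hx y hy
    exact hx.trans hy.symm
  · rintro p a Z₁ q₁ Z₂ q₂ ⟨_, h₁⟩ ⟨_, h₂⟩
    have := h₁.symm.trans h₂
    exact ⟨congrArg Prod.fst this, congrArg Prod.snd this⟩
  · rintro p a Z q₁ q₂ ⟨_, h₁⟩ ⟨_, h₂⟩
    exact h₁.symm.trans h₂
  · rintro p a q₁ q₂ ⟨a₁, ha₁, _, h₁⟩ ⟨a₂, ha₂, _, h₂⟩
    rw [ha₂] at ha₁
    injection ha₁ with ha₁
    subst ha₁
    exact h₁.symm.trans h₂
  · rintro p q' - ⟨a, ha, _⟩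
    exact absurd ha (by simp)

lemma compl_step_char {c d : (compl M).Conf} (h : (compl M).Step c d) :
    ∃ a σ, c.2.1 = a :: σ ∧ d = ((qd kind M c.1 c.2.2 a).1, σ, (qd kind M c.1 c.2.2 a).2) := by
  cases h with
  | @push p q a Z σ α hmem =>
    obtain ⟨hk, hq⟩ := hmem
    refine ⟨a, σ, rfl, ?_⟩
    show (q, σ, Z :: α) = _
    simp only [qd, hk]
    rw [show M.qpush p a = (Z, q) from hq]
    rfl
  | @pop p q a Z σ α hmem =>
    obtain ⟨hk, hq⟩ := hmem
    refine ⟨a, σ, rfl, ?_⟩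
    show (q, σ, α) = _
    simp only [qd, hk]
    rw [show M.qpop p a (some Z) = q from hq]
    rfl
  | @popEmpty p q a σ hmem =>
    obtain ⟨hk, hq⟩ := hmem
    refine ⟨a, σ, rfl, ?_⟩
    show (q, σ, []) = _
    simp only [qd, hk]
    rw [show M.qpop p a none = q from hq]
    rfl
  | @int p q a σ α hmem =>
    obtain ⟨b, hb, hk, hq⟩ := hmem
    injection hb with hb
    subst hb
    refine ⟨a, σ, rfl, ?_⟩
    show (q, σ, α) = _
    simp only [qd, hk]
    rw [show M.qint p a = q from hq]
    rfl
  | eps hmem =>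
    obtain ⟨b, hb, _⟩ := hmem
    exact absurd hb (by simp)

lemma compl_qd_step (s : Option M.State) (α : List (Option M.Stack)) (a : A) (σ : List A) :
    (compl M).Step (s, a :: σ, α) ((qd kind M s α a).1, σ, (qd kind M s α a).2) := by
  cases hk : kind a with
  | call =>
    have : (qd kind M s α a) = ((M.qpush s a).2, (M.qpush s a).1 :: α) := by
      simp only [qd, hk]
    rw [this]
    exact Step.push (show _ ∧ _ from ⟨hk, rfl⟩)
  | ret =>
    cases α with
    | nil =>
      have : (qd kind M s [] a) = (M.qpop s a none, ([] : List (Option M.Stack))) := by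
        simp only [qd, hk]
      rw [this]
      exact Step.popEmpty (show _ ∧ _ from ⟨hk, rfl⟩)
    | cons Z rest =>
      have : (qd kind M s (Z :: rest) a) = (M.qpop s a (some Z), rest) := by
        simp only [qd, hk]
      rw [this]
      exact Step.pop (show _ ∧ _ from ⟨hk, rfl⟩)
  | intern =>
    have : (qd kind M s α a) = (M.qint s a, α) := by
      simp only [qd, hk]
    rw [this]
    exact Step.int ⟨a, rfl, hk, rfl⟩

lemma compl_qrun_steps :
    ∀ (σ : List A) (s : Option M.State) (α : List (Option M.Stack)),
      (compl M).Steps (s, σ, α) ((M.qrun s α σ).1, [], (M.qrun s α σ).2) := by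
  intro σ
  induction σ with
  | nil => intro s α; exact Relation.ReflTransGen.refl
  | cons a σ ih =>
    intro s α
    exact Relation.ReflTransGen.head (compl_qd_step s α a σ)
      (ih (qd kind M s α a).1 (qd kind M s α a).2)

lemma compl_steps_qrun :
    ∀ (σ : List A) (s : Option M.State) (α : List (Option M.Stack))
      (p : Option M.State) (β : List (Option M.Stack)),
      (compl M).Steps (s, σ, α) (p, [], β) → (p, β) = M.qrun s α σ := by
  intro σ
  induction σ with
  | nil =>
    intro s α p β h
    rcases Relation.ReflTransGen.cases_head h with h' | ⟨c, hc, _⟩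
    · injection h' with h1 h2
      injection h2 with _ h3
      rw [h1, h3]
      rfl
    · obtain ⟨a, σ', hσ, -⟩ := compl_step_char hc
      exact absurd hσ (by simp)
  | cons a σ ih =>
    intro s α p β h
    rcases Relation.ReflTransGen.cases_head h with h' | ⟨c, hc, hsteps⟩
    · exact absurd (congrArg (fun c => c.2.1) h') (by simp)
    · obtain ⟨a', σ', hσ, hd⟩ := compl_step_char hc
      simp only at hσ
      injection hσ with h1 h2
      subst h1; subst h2; subst hd
      exact ih _ _ p β hsteps

lemma compl_nonBlocking : (compl M).NonBlocking := by
  intro s σ α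
  exact ⟨(M.qrun s α σ).1, (M.qrun s α σ).2, compl_qrun_steps σ s α⟩

lemma compl_lang_iff (σ : List A) :
    σ ∈ (compl M).Lang ↔ Fpred M (M.qrun (qinit M) [] σ).1 := by
  constructor
  · rintro ⟨s₀, hs₀, p, hp, β, hsteps⟩
    have hs : s₀ = qinit M := hs₀
    subst hs
    have := compl_steps_qrun σ (qinit M) [] p β hsteps
    have hp1 : p = (M.qrun (qinit M) [] σ).1 := congrArg Prod.fst this
    exact hp1 ▸ hp
  · intro h
    exact ⟨qinit M, rfl, (M.qrun (qinit M) [] σ).1, h, (M.qrun (qinit M) [] σ).2,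
      compl_qrun_steps σ (qinit M) []⟩

end VPA

/-- Deterministic VPLs are closed under complementation: for a
deterministic VPA with `n` states there is a non-blocking, deterministic VPA with no
ε-transitions and `n+1` states accepting the complement language. -/
theorem vpa_complement {A : Type} {kind : A → VPKind} (M : VPA A kind)
    (hdet : M.Deterministic) :
    ∃ Q : VPA A kind, Q.NonBlocking ∧ Q.Deterministic ∧ Q.NoEps ∧
      Fintype.card Q.State = Fintype.card M.State + 1 ∧
      Q.Lang = M.Langᶜ := by
  classical
  refine ⟨VPA.compl M, VPA.compl_nonBlocking, VPA.compl_det, VPA.compl_noEps, ?_, ?_⟩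
  · exact Fintype.card_option
  · ext σ
    rw [Set.mem_compl_iff]
    rw [show (σ ∈ (VPA.compl M).Lang ↔ VPA.Fpred M (M.qrun (VPA.qinit M) [] σ).1) from
      VPA.compl_lang_iff σ]
    rw [show (σ ∈ M.Lang ↔ _) from VPA.mem_lang_iff_mrun hdet σ]
    by_cases hne : M.init.Nonempty
    · have hqi : VPA.qinit M = some hne.choose := dif_pos hne
      have hs₀ : hne.choose ∈ M.init := hne.choose_spec
      rw [hqi]
      cases hmr : M.mrun hne.choose [] σ with
      | none =>
        have h1 : (M.qrun (some hne.choose) [] σ).1 = none := by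
          have := VPA.qrun_mrun_none hdet σ hne.choose [] hmr
          simpa using this
        refine iff_of_true ?_ ?_
        · intro p hp
          rw [h1] at hp
          exact absurd hp (by simp)
        · rintro ⟨s, hs, p', γ, hm, -⟩
          have hss : s = hne.choose := hdet.1 hs hs₀
          rw [hss, hmr] at hm
          exact absurd hm (by simp)
      | some c =>
        have h1 : M.qrun (some hne.choose) [] σ = (some c.1, c.2.map some) := by
          have := VPA.qrun_mrun_some hdet σ hne.choose [] c hmr
          simpa using this
        rw [h1]
        constructor
        · rintro hF ⟨s, hs, p', γ, hm, f, hf, he⟩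
          have hss : s = hne.choose := hdet.1 hs hs₀
          rw [hss, hmr] at hm
          injection hm with hm
          have hp' : p' = c.1 := (congrArg Prod.fst hm).symm
          exact hF c.1 rfl ⟨f, hp' ▸ he, hf⟩
        · intro hN p hp
          injection hp with hp
          rintro ⟨q, he, hq⟩
          exact hN ⟨hne.choose, hs₀, c.1, c.2, hmr, q, hq, hp ▸ he⟩
    · have hqi : VPA.qinit M = none := dif_neg hne
      rw [hqi]
      refine iff_of_true ?_ ?_
      · intro p hp
        rw [VPA.qrun_none σ []] at hp
        exact absurd hp (by simp)
      · rintro ⟨s, hs, -⟩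
        exact hne ⟨s, hs⟩
end

section
/- Let S be a VPA over an alphabet A with n states and let B ⊆ A. Then there exists a non-blocking VPA Q over A with at most 2n+2 states and no ε-transitions such that L(Q) = L(S)·B, the concatenation of L(S) with the single-symbol words of B. -/
namespace ConcatAux

variable {A : Type} {kind : A → VPKind} (M : VPA A kind) (B : Set A)

/-- ε-reachability in `M`. -/
def E (p q : M.State) : Prop :=
  Relation.ReflTransGen (fun x y => (x, none, y) ∈ M.intT) p q

/-- States that can ε-reach a final state. -/
def Fc (p : M.State) : Prop := ∃ f ∈ M.final, E M p f

/-- The constructed automaton: ε-closure of `M`, an accepting state `inr true`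
reached by reading a `B`-symbol from a final-closure state, plus a sink `inr false`. -/
def Q : VPA A kind where
  State := M.State ⊕ Bool
  Stack := Option M.Stack
  fintypeState := inferInstance
  init := Sum.inl '' M.init
  final := {Sum.inr true}
  pushT := { t | kind t.2.1 = VPKind.call ∧
    ((∃ p₀ q₀ Z₀ p₁, t.1 = Sum.inl p₀ ∧ t.2.2.2 = Sum.inl q₀ ∧ t.2.2.1 = some Z₀ ∧
        E M p₀ p₁ ∧ (p₁, t.2.1, Z₀, q₀) ∈ M.pushT) ∨
     (∃ p₀, t.1 = Sum.inl p₀ ∧ Fc M p₀ ∧ t.2.1 ∈ B ∧ t.2.2.2 = Sum.inr true) ∨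
     (t.2.2.2 = Sum.inr false ∧ t.2.2.1 = none)) }
  popT := { t | kind t.2.1 = VPKind.ret ∧
    ((∃ p₀ q₀ Zm p₁, t.1 = Sum.inl p₀ ∧ t.2.2.2 = Sum.inl q₀ ∧
        t.2.2.1 = Option.map some Zm ∧
        E M p₀ p₁ ∧ (p₁, t.2.1, Zm, q₀) ∈ M.popT) ∨
     (∃ p₀, t.1 = Sum.inl p₀ ∧ Fc M p₀ ∧ t.2.1 ∈ B ∧ t.2.2.2 = Sum.inr true) ∨
     t.2.2.2 = Sum.inr false) }
  intT := { t | ∃ a, t.2.1 = some a ∧ kind a = VPKind.intern ∧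
    ((∃ p₀ q₀ p₁, t.1 = Sum.inl p₀ ∧ t.2.2 = Sum.inl q₀ ∧
        E M p₀ p₁ ∧ (p₁, some a, q₀) ∈ M.intT) ∨
     (∃ p₀, t.1 = Sum.inl p₀ ∧ Fc M p₀ ∧ a ∈ B ∧ t.2.2 = Sum.inr true) ∨
     t.2.2 = Sum.inr false) }
  push_call := fun _ _ _ _ h => h.1
  pop_ret := fun _ _ _ _ h => h.1
  int_simple := by
    rintro p a q ⟨a', ha', hk, -⟩
    cases ha'; exact hk

lemma eps_steps {p q : M.State} (h : E M p q) (σ : List A) (α : List M.Stack) :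
    M.Steps (p, σ, α) (q, σ, α) := by
  induction h with
  | refl => exact Relation.ReflTransGen.refl
  | tail _ h2 ih => exact ih.tail (VPA.Step.eps h2)

lemma step_sink {c d : (Q M B).Conf} (h : (Q M B).Step c d) {x : Bool}
    (hc : c.1 = Sum.inr x) : d.1 = Sum.inr false := by
  cases h with
  | push ht =>
      obtain ⟨-, ⟨p₀, q₀, Z₀, p₁, he1, -⟩ | ⟨p₀, he1, -⟩ | ⟨he1, -⟩⟩ := ht
      · rw [hc] at he1; cases he1
      · rw [hc] at he1; cases he1
      · exact he1
  | pop ht =>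
      obtain ⟨-, ⟨p₀, q₀, Zm, p₁, he1, -⟩ | ⟨p₀, he1, -⟩ | he1⟩ := ht
      · rw [hc] at he1; cases he1
      · rw [hc] at he1; cases he1
      · exact he1
  | popEmpty ht =>
      obtain ⟨-, ⟨p₀, q₀, Zm, p₁, he1, -⟩ | ⟨p₀, he1, -⟩ | he1⟩ := ht
      · rw [hc] at he1; cases he1
      · rw [hc] at he1; cases he1
      · exact he1
  | int ht =>
      obtain ⟨a', ha', -, ⟨p₀, q₀, p₁, he1, -⟩ | ⟨p₀, he1, -⟩ | he1⟩ := ht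
      · rw [hc] at he1; cases he1
      · rw [hc] at he1; cases he1
      · exact he1
  | eps ht =>
      obtain ⟨a', ha', -⟩ := ht
      cases ha'

lemma sink_stays {c d : (Q M B).Conf} (h : (Q M B).Steps c d)
    (hc : c.1 = Sum.inr false) : d.1 = Sum.inr false := by
  induction h with
  | refl => exact hc
  | tail _ h2 ih => exact step_sink M B h2 ih

lemma acc_stops {c d : (Q M B).Conf} (h : (Q M B).Steps c d)
    (hc : c.1 = Sum.inr true) (hd : d.1 = Sum.inr true) : c = d := by
  rcases h.cases_head with rfl | ⟨e, hstep, hrest⟩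
  · rfl
  · have := sink_stays M B hrest (step_sink M B hstep hc)
    rw [hd] at this; cases this

/-- Forward simulation: the closure automaton simulates `M` runs. -/
lemma fwd (w : List A) : ∀ {c c' : M.Conf}, M.Steps c c' → ∀ p', E M p' c.1 →
    ∃ q', E M q' c'.1 ∧ (Q M B).Steps (Sum.inl p', c.2.1 ++ w, c.2.2.map some)
      (Sum.inl q', c'.2.1 ++ w, c'.2.2.map some) := by
  intro c c' h
  induction h using Relation.ReflTransGen.head_induction_on with
  | refl => exact fun p' hE => ⟨p', hE, Relation.ReflTransGen.refl⟩
  | head hstep hrest ih =>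
      intro p' hE
      cases hstep with
      | @push p q a Z σ α hm =>
          obtain ⟨q', hq', hsteps⟩ := ih q Relation.ReflTransGen.refl
          refine ⟨q', hq', Relation.ReflTransGen.head (VPA.Step.push ?_) hsteps⟩
          exact ⟨M.push_call _ _ _ _ hm, Or.inl ⟨p', q, Z, p, rfl, rfl, rfl, hE, hm⟩⟩
      | @pop p q a Z σ α hm =>
          obtain ⟨q', hq', hsteps⟩ := ih q Relation.ReflTransGen.refl
          refine ⟨q', hq', Relation.ReflTransGen.head (VPA.Step.pop ?_) hsteps⟩
          exact ⟨M.pop_ret _ _ _ _ hm, Or.inl ⟨p', q, some Z, p, rfl, rfl, rfl, hE, hm⟩⟩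
      | @popEmpty p q a σ hm =>
          obtain ⟨q', hq', hsteps⟩ := ih q Relation.ReflTransGen.refl
          refine ⟨q', hq', Relation.ReflTransGen.head (VPA.Step.popEmpty ?_) hsteps⟩
          exact ⟨M.pop_ret _ _ _ _ hm, Or.inl ⟨p', q, none, p, rfl, rfl, rfl, hE, hm⟩⟩
      | @int p q a σ α hm =>
          obtain ⟨q', hq', hsteps⟩ := ih q Relation.ReflTransGen.refl
          refine ⟨q', hq', Relation.ReflTransGen.head (VPA.Step.int ?_) hsteps⟩
          exact ⟨a, rfl, M.int_simple _ _ _ hm, Or.inl ⟨p', q, p, rfl, rfl, hE, hm⟩⟩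
      | @eps p q σ α hm =>
          exact ih p' (hE.tail hm)

/-- Backward simulation. -/
lemma bwd : ∀ {c c' : (Q M B).Conf}, (Q M B).Steps c c' →
    c'.1 = Sum.inr true → c'.2.1 = [] →
    ∀ (p : M.State) (α : List M.Stack), c.1 = Sum.inl p → c.2.2 = α.map some →
    ∃ σ b, c.2.1 = σ ++ [b] ∧ b ∈ B ∧ ∃ q γ, Fc M q ∧ M.Steps (p, σ, α) (q, [], γ) := by
  intro c c' h
  induction h using Relation.ReflTransGen.head_induction_on with
  | refl =>
      intro hacc hnil p α hp hα
      rw [hp] at hacc; cases hacc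
  | head hstep hrest ih =>
      intro hacc hnil p α hp hα
      cases hstep with
      | @push pb qb a Z σ ab hm =>
          obtain ⟨hk, ⟨p₀, q₀, Z₀, p₁, he1, he2, he3, hE, hmm⟩ | ⟨p₀, he1, hF, hB, he2⟩
            | ⟨he1, -⟩⟩ := hm
          · simp only at hp hα
            rw [hp] at he1
            obtain rfl := Sum.inl.injEq .. ▸ he1
            subst he2 he3 hα
            obtain ⟨σ', b, heq, hb, q, γ, hq, hsteps⟩ :=
              ih hacc hnil q₀ (Z₀ :: α) rfl rfl
            simp only at heq
            refine ⟨a :: σ', b, by rw [heq]; rfl, hb, q, γ, hq, ?_⟩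
            exact (eps_steps M hE _ _).trans
              (Relation.ReflTransGen.head (VPA.Step.push hmm) hsteps)
          · simp only at hp hα
            rw [hp] at he1
            obtain rfl := Sum.inl.injEq .. ▸ he1
            subst he2
            have hd := acc_stops M B hrest rfl hacc
            have hσ : σ = [] := by rw [← hd] at hnil; exact hnil
            subst hσ hα
            exact ⟨[], a, rfl, hB, p, α, hF, Relation.ReflTransGen.refl⟩
          · subst he1
            have := sink_stays M B hrest rfl
            rw [hacc] at this; cases this
      | @pop pb qb a Zb σ ab' hm =>
          simp only at hp hα
          cases α with
          | nil => cases hα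
          | cons Z₀ α'' =>
          simp only [List.map_cons, List.cons.injEq] at hα
          obtain ⟨rfl, rfl⟩ := hα
          obtain ⟨hk, ⟨p₀, q₀, Zm, p₁, he1, he2, he3, hE, hmm⟩ | ⟨p₀, he1, hF, hB, he2⟩
            | he1⟩ := hm
          · rw [hp] at he1
            obtain rfl := Sum.inl.injEq .. ▸ he1
            subst he2
            obtain rfl : Zm = some Z₀ := by
              cases Zm with
              | none => cases he3
              | some z =>
                  simp only [Option.map_some, Option.some.injEq] at he3
                  rw [Option.some_inj.mp (Option.some_inj.mp he3)]
            obtain ⟨σ', b, heq, hb, q, γ, hq, hsteps⟩ := ih hacc hnil q₀ α'' rfl rfl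
            simp only at heq
            refine ⟨a :: σ', b, by rw [heq]; rfl, hb, q, γ, hq, ?_⟩
            exact (eps_steps M hE _ _).trans
              (Relation.ReflTransGen.head (VPA.Step.pop hmm) hsteps)
          · rw [hp] at he1
            obtain rfl := Sum.inl.injEq .. ▸ he1
            subst he2
            have hd := acc_stops M B hrest rfl hacc
            have hσ : σ = [] := by rw [← hd] at hnil; exact hnil
            subst hσ
            exact ⟨[], a, rfl, hB, p, Z₀ :: α'', hF, Relation.ReflTransGen.refl⟩
          · subst he1
            have := sink_stays M B hrest rfl
            rw [hacc] at this; cases this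
      | @popEmpty pb qb a σ hm =>
          simp only at hp hα
          obtain rfl : α = [] := by
            cases α with
            | nil => rfl
            | cons Z₀ α'' => cases hα
          obtain ⟨hk, ⟨p₀, q₀, Zm, p₁, he1, he2, he3, hE, hmm⟩ | ⟨p₀, he1, hF, hB, he2⟩
            | he1⟩ := hm
          · rw [hp] at he1
            obtain rfl := Sum.inl.injEq .. ▸ he1
            subst he2
            obtain rfl : Zm = none := by
              cases Zm with
              | none => rfl
              | some z => cases he3
            obtain ⟨σ', b, heq, hb, q, γ, hq, hsteps⟩ := ih hacc hnil q₀ [] rfl rfl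
            simp only at heq
            refine ⟨a :: σ', b, by rw [heq]; rfl, hb, q, γ, hq, ?_⟩
            exact (eps_steps M hE _ _).trans
              (Relation.ReflTransGen.head (VPA.Step.popEmpty hmm) hsteps)
          · rw [hp] at he1
            obtain rfl := Sum.inl.injEq .. ▸ he1
            subst he2
            have hd := acc_stops M B hrest rfl hacc
            have hσ : σ = [] := by rw [← hd] at hnil; exact hnil
            subst hσ
            exact ⟨[], a, rfl, hB, p, [], hF, Relation.ReflTransGen.refl⟩
          · subst he1
            have := sink_stays M B hrest rfl
            rw [hacc] at this; cases this
      | @int pb qb a σ ab hm =>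
          simp only at hp hα
          subst hα
          obtain ⟨a', ha', hk, ⟨p₀, q₀, p₁, he1, he2, hE, hmm⟩ | ⟨p₀, he1, hF, hB, he2⟩
            | he1⟩ := hm
          all_goals obtain rfl : a' = a := by cases ha'; rfl
          · rw [hp] at he1
            obtain rfl := Sum.inl.injEq .. ▸ he1
            subst he2
            obtain ⟨σ', b, heq, hb, q, γ, hq, hsteps⟩ := ih hacc hnil q₀ α rfl rfl
            simp only at heq
            refine ⟨a' :: σ', b, by rw [heq]; rfl, hb, q, γ, hq, ?_⟩
            exact (eps_steps M hE _ _).trans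
              (Relation.ReflTransGen.head (VPA.Step.int hmm) hsteps)
          · rw [hp] at he1
            obtain rfl := Sum.inl.injEq .. ▸ he1
            subst he2
            have hd := acc_stops M B hrest rfl hacc
            have hσ : σ = [] := by rw [← hd] at hnil; exact hnil
            subst hσ
            exact ⟨[], a', rfl, hB, p, α, hF, Relation.ReflTransGen.refl⟩
          · subst he1
            have := sink_stays M B hrest rfl
            rw [hacc] at this; cases this
      | @eps pb qb σ ab hm =>
          obtain ⟨a', ha', -⟩ := hm
          cases ha'

end ConcatAux

/-- For a VPA `S` with `n` states and `B ⊆ A`, there is a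
non-blocking VPA with at most `2n+2` states and no ε-transitions accepting
`L(S)·B`. -/
theorem vpa_concat_symbols {A : Type} {kind : A → VPKind} (M : VPA A kind)
    (B : Set A) :
    ∃ Q : VPA A kind, Q.NonBlocking ∧ Q.NoEps ∧
      Fintype.card Q.State ≤ 2 * Fintype.card M.State + 2 ∧
      Q.Lang = { w | ∃ σ ∈ M.Lang, ∃ b ∈ B, w = σ ++ [b] } := by
  classical
  refine ⟨ConcatAux.Q M B, ?_, ?_, ?_, ?_⟩
  · -- non-blocking
    intro s σ α
    induction σ generalizing s α with
    | nil => exact ⟨s, α, Relation.ReflTransGen.refl⟩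
    | cons a σ ih =>
        cases hk : kind a with
        | call =>
            obtain ⟨p, β, h⟩ := ih (Sum.inr false) (none :: α)
            exact ⟨p, β, Relation.ReflTransGen.head
              (VPA.Step.push ⟨hk, Or.inr (Or.inr ⟨rfl, rfl⟩)⟩) h⟩
        | ret =>
            cases α with
            | nil =>
                obtain ⟨p, β, h⟩ := ih (Sum.inr false) []
                exact ⟨p, β, Relation.ReflTransGen.head
                  (VPA.Step.popEmpty ⟨hk, Or.inr (Or.inr rfl)⟩) h⟩
            | cons Z α' =>
                obtain ⟨p, β, h⟩ := ih (Sum.inr false) α'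
                exact ⟨p, β, Relation.ReflTransGen.head
                  (VPA.Step.pop ⟨hk, Or.inr (Or.inr rfl)⟩) h⟩
        | intern =>
            obtain ⟨p, β, h⟩ := ih (Sum.inr false) α
            exact ⟨p, β, Relation.ReflTransGen.head
              (VPA.Step.int ⟨a, rfl, hk, Or.inr (Or.inr rfl)⟩) h⟩
  · -- no ε
    rintro p q ⟨a, ha, -⟩
    cases ha
  · -- state bound
    have : Fintype.card (ConcatAux.Q M B).State =
        Fintype.card M.State + 2 := by
      simp [ConcatAux.Q, Fintype.card_sum]
    omega
  · -- language
    ext w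
    constructor
    · rintro ⟨sb0, ⟨s₀, hs₀, rfl⟩, p, hp, β, hsteps⟩
      have hpacc : p = Sum.inr true := hp
      subst hpacc
      obtain ⟨σ, b, hw, hb, q, γ, ⟨f, hf, hE⟩, hrun⟩ :=
        ConcatAux.bwd M B hsteps rfl rfl s₀ [] rfl rfl
      refine ⟨σ, ⟨s₀, hs₀, f, hf, γ, hrun.trans (ConcatAux.eps_steps M hE _ _)⟩, b, hb, hw⟩
    · rintro ⟨σ, ⟨s₀, hs₀, f, hf, β, hsteps⟩, b, hb, rfl⟩
      obtain ⟨q', hE, hQ⟩ :=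
        ConcatAux.fwd M B [b] hsteps s₀ Relation.ReflTransGen.refl
      have hFc : ConcatAux.Fc M q' := ⟨f, hf, hE⟩
      refine ⟨Sum.inl s₀, ⟨s₀, hs₀, rfl⟩, Sum.inr true, rfl, ?_⟩
      cases hk : kind b with
      | call =>
          exact ⟨none :: β.map some, hQ.tail
            (VPA.Step.push ⟨hk, Or.inr (Or.inl ⟨q', rfl, hFc, hb, rfl⟩)⟩)⟩
      | ret =>
          cases β with
          | nil =>
              exact ⟨[], hQ.tail
                (VPA.Step.popEmpty ⟨hk, Or.inr (Or.inl ⟨q', rfl, hFc, hb, rfl⟩)⟩)⟩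
          | cons Z β' =>
              exact ⟨β'.map some, hQ.tail
                (VPA.Step.pop ⟨hk, Or.inr (Or.inl ⟨q', rfl, hFc, hb, rfl⟩)⟩)⟩
      | intern =>
          exact ⟨β.map some, hQ.tail
            (VPA.Step.int ⟨b, rfl, hk, Or.inr (Or.inl ⟨q', rfl, hFc, hb, rfl⟩)⟩)⟩
end

section
/- Let S be a specification IOVPTS and I an implementation IOVPTS over the same alphabet L = L_I ∪ L_U. Then D = otr(S)·L_U is a visibly pushdown language, and I ioco-like-conforms to S if and only if I (D,∅)-visibly conforms to S. -/
namespace VPTS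

variable {L : Type} {kind : L → VPKind}

lemma obs_trans {M : VPTS L kind} {c d e : M.Conf} {σ τ : List L}
    (h1 : M.Obs c σ d) (h2 : M.Obs d τ e) : M.Obs c (σ ++ τ) e := by
  induction h1 with
  | refl c => exact h2
  | push h _ ih => exact .push h (ih h2)
  | pop h _ ih => exact .pop h (ih h2)
  | popEmpty h _ ih => exact .popEmpty h (ih h2)
  | int h _ ih => exact .int h (ih h2)
  | silent h _ ih => exact .silent h (ih h2)

lemma obs_split {M : VPTS L kind} {c e : M.Conf} {ρ : List L}
    (h : M.Obs c ρ e) : ∀ σ τ : List L, ρ = σ ++ τ →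
      ∃ d, M.Obs c σ d ∧ M.Obs d τ e := by
  induction h with
  | refl c =>
    rintro σ τ hστ
    obtain ⟨rfl, rfl⟩ := List.append_eq_nil_iff.mp hστ.symm
    exact ⟨c, .refl c, .refl c⟩
  | push h hobs ih =>
    rintro σ τ hστ
    cases σ with
    | nil =>
      simp only [List.nil_append] at hστ
      subst hστ
      exact ⟨_, .refl _, .push h hobs⟩
    | cons b σ' =>
      simp only [List.cons_append, List.cons.injEq] at hστ
      obtain ⟨rfl, h2⟩ := hστ
      obtain ⟨d, hd1, hd2⟩ := ih σ' τ h2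
      exact ⟨d, .push h hd1, hd2⟩
  | pop h hobs ih =>
    rintro σ τ hστ
    cases σ with
    | nil =>
      simp only [List.nil_append] at hστ
      subst hστ
      exact ⟨_, .refl _, .pop h hobs⟩
    | cons b σ' =>
      simp only [List.cons_append, List.cons.injEq] at hστ
      obtain ⟨rfl, h2⟩ := hστ
      obtain ⟨d, hd1, hd2⟩ := ih σ' τ h2
      exact ⟨d, .pop h hd1, hd2⟩
  | popEmpty h hobs ih =>
    rintro σ τ hστ
    cases σ with
    | nil =>
      simp only [List.nil_append] at hστ
      subst hστ
      exact ⟨_, .refl _, .popEmpty h hobs⟩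
    | cons b σ' =>
      simp only [List.cons_append, List.cons.injEq] at hστ
      obtain ⟨rfl, h2⟩ := hστ
      obtain ⟨d, hd1, hd2⟩ := ih σ' τ h2
      exact ⟨d, .popEmpty h hd1, hd2⟩
  | int h hobs ih =>
    rintro σ τ hστ
    cases σ with
    | nil =>
      simp only [List.nil_append] at hστ
      subst hστ
      exact ⟨_, .refl _, .int h hobs⟩
    | cons b σ' =>
      simp only [List.cons_append, List.cons.injEq] at hστ
      obtain ⟨rfl, h2⟩ := hστ
      obtain ⟨d, hd1, hd2⟩ := ih σ' τ h2
      exact ⟨d, .int h hd1, hd2⟩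
  | silent h hobs ih =>
    rintro σ τ hστ
    obtain ⟨d, hd1, hd2⟩ := ih σ τ hστ
    exact ⟨d, .silent h hd1, hd2⟩

/-- The VPA recognizing `otr(S)·LU`. -/
def auxVPA (S : VPTS L kind) (LU : Set L) : VPA L kind where
  State := Option S.State
  Stack := Option S.Stack
  fintypeState := inferInstance
  init := { x | ∃ s ∈ S.init, x = some s }
  final := {none}
  pushT := { t | (∃ p a Z q, (p, a, Z, q) ∈ S.pushT ∧ t = (some p, a, some Z, some q)) ∨
      (∃ p ℓ, ℓ ∈ LU ∧ kind ℓ = VPKind.call ∧ t = (some p, ℓ, none, none)) }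
  popT := { t | (∃ p a Z q, (p, a, Z, q) ∈ S.popT ∧ t = (some p, a, Z.map some, some q)) ∨
      (∃ p ℓ Z, ℓ ∈ LU ∧ kind ℓ = VPKind.ret ∧ t = (some p, ℓ, Z, none)) }
  intT := { t | (∃ p a q, (p, a, q) ∈ S.intT ∧ t = (some p, a, some q)) ∨
      (∃ p ℓ, ℓ ∈ LU ∧ kind ℓ = VPKind.intern ∧ t = (some p, some ℓ, none)) }
  push_call := by
    rintro p a Z q (⟨p', a', Z', q', hm, heq⟩ | ⟨p', ℓ, hℓ, hk, heq⟩) <;>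
      simp only [Prod.mk.injEq] at heq
    · obtain ⟨-, rfl, -, -⟩ := heq
      exact S.push_call _ _ _ _ hm
    · obtain ⟨-, rfl, -, -⟩ := heq
      exact hk
  pop_ret := by
    rintro p a Z q (⟨p', a', Z', q', hm, heq⟩ | ⟨p', ℓ, Z'', hℓ, hk, heq⟩) <;>
      simp only [Prod.mk.injEq] at heq
    · obtain ⟨-, rfl, -, -⟩ := heq
      exact S.pop_ret _ _ _ _ hm
    · obtain ⟨-, rfl, -, -⟩ := heq
      exact hk
  int_simple := by
    rintro p a q (⟨p', a', q', hm, heq⟩ | ⟨p', ℓ, hℓ, hk, heq⟩) <;>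
      simp only [Prod.mk.injEq, Option.some.injEq] at heq
    · obtain ⟨-, rfl, -⟩ := heq
      exact S.int_simple _ _ _ hm
    · obtain ⟨-, rfl, -⟩ := heq
      exact hk

lemma tup4 {α β γ δ : Type} {a a' : α} {b b' : β} {c c' : γ} {d d' : δ}
    (h : (a, b, c, d) = (a', b', c', d')) : a = a' ∧ b = b' ∧ c = c' ∧ d = d' := by
  simp only [Prod.mk.injEq] at h
  exact h

lemma tup3 {α β γ : Type} {a a' : α} {b b' : β} {c c' : γ}
    (h : (a, b, c) = (a', b', c')) : a = a' ∧ b = b' ∧ c = c' := by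
  simp only [Prod.mk.injEq] at h
  exact h

lemma sim_steps {S : VPTS L kind} {LU : Set L} {c₀ c : S.Conf} {σ : List L}
    (h : S.Obs c₀ σ c) (ρ : List L) :
    (auxVPA S LU).Steps (some c₀.1, σ ++ ρ, c₀.2.map some)
      (some c.1, ρ, c.2.map some) := by
  induction h with
  | refl c => exact Relation.ReflTransGen.refl
  | @push p q a Z α σ' c h _ ih =>
    exact Relation.ReflTransGen.head
      (VPA.Step.push (Or.inl ⟨p, a, Z, q, h, rfl⟩)) ih
  | @pop p q a Z α σ' c h _ ih =>
    exact Relation.ReflTransGen.head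
      (VPA.Step.pop (Or.inl ⟨p, a, some Z, q, h, rfl⟩)) ih
  | @popEmpty p q a σ' c h _ ih =>
    exact Relation.ReflTransGen.head
      (VPA.Step.popEmpty (Or.inl ⟨p, a, none, q, h, rfl⟩)) ih
  | @int p q a α σ' c h _ ih =>
    exact Relation.ReflTransGen.head
      (VPA.Step.int (Or.inl ⟨p, some a, q, h, rfl⟩)) ih
  | @silent p q α σ' c h _ ih =>
    exact Relation.ReflTransGen.head
      (VPA.Step.eps (Or.inl ⟨p, none, q, h, rfl⟩)) ih

lemma no_step_none {S : VPTS L kind} {LU : Set L} {τ : List L}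
    {γ : List (auxVPA S LU).Stack} {c : (auxVPA S LU).Conf} :
    ¬ (auxVPA S LU).Step ((none : Option S.State), τ, γ) c := by
  intro h
  cases h with
  | push h => rcases h with ⟨p, a, Z, q, hm, heq⟩ | ⟨p, ℓ, hℓ, hk, heq⟩ <;>
      cases heq
  | pop h => rcases h with ⟨p, a, Z, q, hm, heq⟩ | ⟨p, ℓ, Z, hℓ, hk, heq⟩ <;>
      cases heq
  | popEmpty h => rcases h with ⟨p, a, Z, q, hm, heq⟩ | ⟨p, ℓ, Z, hℓ, hk, heq⟩ <;>
      cases heq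
  | int h => rcases h with ⟨p, a, q, hm, heq⟩ | ⟨p, ℓ, hℓ, hk, heq⟩ <;>
      cases heq
  | eps h => rcases h with ⟨p, a, q, hm, heq⟩ | ⟨p, ℓ, hℓ, hk, heq⟩ <;>
      cases heq

lemma steps_none {S : VPTS L kind} {LU : Set L} {τ : List L}
    {γ : List (auxVPA S LU).Stack} {c : (auxVPA S LU).Conf}
    (h : (auxVPA S LU).Steps ((none : Option S.State), τ, γ) c) :
    c = ((none : Option S.State), τ, γ) := by
  rcases h.cases_head with rfl | ⟨d, hstep, _⟩
  · rfl
  · exact absurd hstep no_step_none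

lemma back_aux {S : VPTS L kind} {LU : Set L} {β : List (auxVPA S LU).Stack}
    (c : (auxVPA S LU).Conf)
    (h : (auxVPA S LU).Steps c ((none : Option S.State), ([] : List L), β)) :
    ∀ (p : S.State) (σ : List L) (α : List S.Stack),
      c = (some p, σ, α.map some) →
      ∃ σ' ℓ, σ = σ' ++ [ℓ] ∧ ℓ ∈ LU ∧ ∃ d, S.Obs (p, α) σ' d := by
  induction h using Relation.ReflTransGen.head_induction_on with
  | refl =>
    rintro p σ α heq
    cases heq
  | @head c₁ c₂ hstep htail ih =>
    rintro p σ α heq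
    cases hstep with
    | @push p₁ q₁ a₁ Z₁ σ₁ α₁ hm =>
      obtain ⟨hp, hσα⟩ := Prod.mk.inj heq
      obtain ⟨hσ, hα⟩ := Prod.mk.inj hσα
      rcases hm with ⟨p', a', Z', q', hm, heq'⟩ | ⟨p', ℓ, hℓ, hk, heq'⟩ <;>
        replace heq' := tup4 heq'
      · obtain ⟨h1, rfl, rfl, rfl⟩ := heq'
        obtain rfl : p = p' := Option.some_injective _ (hp.symm.trans h1)
        obtain ⟨σ'', ℓ, rfl, hℓ, d, hobs⟩ :=
          ih q' σ₁ (Z' :: α) (by rw [hα, List.map_cons]; rfl)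
        exact ⟨a₁ :: σ'', ℓ, by subst hσ; rfl, hℓ, d, .push hm hobs⟩
      · obtain ⟨h1, rfl, rfl, rfl⟩ := heq'
        have h2 := steps_none (S := S) (LU := LU) htail
        replace h2 := tup3 h2
        obtain ⟨-, h3, -⟩ := h2
        exact ⟨[], a₁, by subst hσ; subst h3; rfl, hℓ, (p, α), .refl _⟩
    | @pop p₁ q₁ a₁ Z₁ σ₁ α₁ hm =>
      obtain ⟨hp, hσα⟩ := Prod.mk.inj heq
      obtain ⟨hσ, hα⟩ := Prod.mk.inj hσα
      cases α with
      | nil => exact absurd hα.symm (by simp)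
      | cons a₀ α' =>
        simp only [List.map_cons, List.cons.injEq] at hα
        obtain ⟨hZ, hα'⟩ := List.cons.inj hα
        rcases hm with ⟨p', a', Z', q', hm, heq'⟩ | ⟨p', ℓ, Z'', hℓ, hk, heq'⟩ <;>
          replace heq' := tup4 heq'
        · obtain ⟨h1, rfl, h3, rfl⟩ := heq'
          obtain rfl : p = p' := Option.some_injective _ (hp.symm.trans h1)
          cases Z' with
          | none => simp at h3
          | some z =>
            simp only [Option.map_some, Option.some.injEq] at h3
            obtain rfl : Z₁ = some z := Option.some_injective _ h3
            obtain rfl : z = a₀ := Option.some_injective _ hZ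
            obtain ⟨σ'', ℓ, rfl, hℓ, d, hobs⟩ :=
              ih q' σ₁ α' (by rw [hα']; rfl)
            exact ⟨a₁ :: σ'', ℓ, by subst hσ; rfl, hℓ, d, .pop hm hobs⟩
        · obtain ⟨h1, rfl, h3, rfl⟩ := heq'
          have h2 := steps_none (S := S) (LU := LU) htail
          replace h2 := tup3 h2
          obtain ⟨-, h4, -⟩ := h2
          exact ⟨[], a₁, by subst hσ; subst h4; rfl, hℓ, (p, a₀ :: α'), .refl _⟩
    | @popEmpty p₁ q₁ a₁ σ₁ hm =>
      obtain ⟨hp, hσα⟩ := Prod.mk.inj heq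
      obtain ⟨hσ, hα⟩ := Prod.mk.inj hσα
      have hαnil : α = [] := by
        cases α with
        | nil => rfl
        | cons a₀ α' => exact absurd hα.symm (by simp)
      subst hαnil
      rcases hm with ⟨p', a', Z', q', hm, heq'⟩ | ⟨p', ℓ, Z'', hℓ, hk, heq'⟩ <;>
        replace heq' := tup4 heq'
      · obtain ⟨h1, rfl, h3, rfl⟩ := heq'
        obtain rfl : p = p' := Option.some_injective _ (hp.symm.trans h1)
        have hZ' : Z' = none := by
          cases Z' with
          | none => rfl
          | some z => simp at h3
        subst hZ'
        obtain ⟨σ'', ℓ, rfl, hℓ, d, hobs⟩ := ih q' σ₁ [] rfl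
        exact ⟨a₁ :: σ'', ℓ, by subst hσ; rfl, hℓ, d, .popEmpty hm hobs⟩
      · obtain ⟨h1, rfl, h3, rfl⟩ := heq'
        have h2 := steps_none (S := S) (LU := LU) htail
        replace h2 := tup3 h2
        obtain ⟨-, h4, -⟩ := h2
        exact ⟨[], a₁, by subst hσ; subst h4; rfl, hℓ, (p, []), .refl _⟩
    | @int p₁ q₁ a₁ σ₁ α₁ hm =>
      obtain ⟨hp, hσα⟩ := Prod.mk.inj heq
      obtain ⟨hσ, hα⟩ := Prod.mk.inj hσα
      rcases hm with ⟨p', a', q', hm, heq'⟩ | ⟨p', ℓ, hℓ, hk, heq'⟩ <;>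
        replace heq' := tup3 heq'
      · obtain ⟨h1, h2', rfl⟩ := heq'
        obtain rfl : p = p' := Option.some_injective _ (hp.symm.trans h1)
        subst h2'
        obtain ⟨σ'', ℓ, rfl, hℓ, d, hobs⟩ := ih q' σ₁ α (by rw [hα]; rfl)
        exact ⟨a₁ :: σ'', ℓ, by subst hσ; rfl, hℓ, d, .int hm hobs⟩
      · obtain ⟨h1, h2', rfl⟩ := heq'
        obtain rfl : a₁ = ℓ := Option.some_injective _ h2'
        have h2 := steps_none (S := S) (LU := LU) htail
        replace h2 := tup3 h2
        obtain ⟨-, h4, -⟩ := h2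
        exact ⟨[], a₁, by subst hσ; subst h4; rfl, hℓ, (p, α), .refl _⟩
    | @eps p₁ q₁ σ₁ α₁ hm =>
      obtain ⟨hp, hσα⟩ := Prod.mk.inj heq
      obtain ⟨hσ, hα⟩ := Prod.mk.inj hσα
      rcases hm with ⟨p', a', q', hm, heq'⟩ | ⟨p', ℓ, hℓ, hk, heq'⟩ <;>
        replace heq' := tup3 heq'
      · obtain ⟨h1, h2', rfl⟩ := heq'
        obtain rfl : p = p' := Option.some_injective _ (hp.symm.trans h1)
        obtain rfl : a' = none := h2'.symm
        obtain ⟨σ'', ℓ, rfl, hℓ, d, hobs⟩ := ih q' σ₁ α (by rw [hα]; rfl)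
        exact ⟨σ'', ℓ, hσ.symm, hℓ, d, .silent hm hobs⟩
      · exact absurd heq'.2.1 (Option.some_ne_none _).symm

lemma lang_auxVPA (S : VPTS L kind) (LU : Set L) :
    (auxVPA S LU).Lang = S.otrConcat LU := by
  ext σ
  constructor
  · rintro ⟨s₀, hs₀, pf, hpf, β, hsteps⟩
    obtain ⟨s, hs, rfl⟩ := hs₀
    have hpf' : pf = none := hpf
    subst hpf'
    obtain ⟨σ', ℓ, rfl, hℓ, d, hobs⟩ :=
      back_aux _ hsteps s σ [] rfl
    exact ⟨σ', ⟨s, hs, d, hobs⟩, ℓ, hℓ, rfl⟩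
  · rintro ⟨σ', ⟨s, hs, ⟨q, γ⟩, hobs⟩, ℓ, hℓ, rfl⟩
    refine ⟨some s, ⟨s, hs, rfl⟩, none, rfl, ?_⟩
    have h1 := sim_steps (LU := LU) hobs [ℓ]
    -- one more step reading ℓ
    have h2 : ∃ β, (auxVPA S LU).Step (some q, [ℓ], γ.map some)
        ((none : Option S.State), [], β) := by
      cases hk : kind ℓ with
      | call => exact ⟨none :: γ.map some, .push (Or.inr ⟨q, ℓ, hℓ, hk, rfl⟩)⟩
      | ret =>
        cases hγ : γ.map some with
        | nil =>
          obtain rfl := List.map_eq_nil_iff.mp hγ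
          exact ⟨[], .popEmpty (M := auxVPA S LU) (Or.inr ⟨q, ℓ, none, hℓ, hk, rfl⟩)⟩
        | cons Z γ' =>
          obtain ⟨z, γ'', rfl, rfl, rfl⟩ := List.map_eq_cons_iff.mp hγ
          refine ⟨γ''.map some, ?_⟩
          exact .pop (M := auxVPA S LU) (Or.inr ⟨q, ℓ, some (some z), hℓ, hk, rfl⟩)
      | intern => exact ⟨γ.map some, .int (Or.inr ⟨q, ℓ, hℓ, hk, rfl⟩)⟩
    obtain ⟨β, hst⟩ := h2
    exact ⟨β, h1.trans (Relation.ReflTransGen.single hst)⟩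

end VPTS

/-- `D = otr(S)·L_U` is a visibly pushdown language, and `I`
ioco-like conforms to `S` iff `I` (D,∅)-visibly conforms to `S`. -/
theorem ioco_iff_vconf {L : Type} {kind : L → VPKind} (LU : Set L)
    (S I : VPTS L kind) :
    (∃ M : VPA L kind, M.Lang = S.otrConcat LU) ∧
    (VPTS.Ioco LU I S ↔ VPTS.VConf I S (S.otrConcat LU) ∅) := by
  constructor
  · exact ⟨VPTS.auxVPA S LU, VPTS.lang_auxVPA S LU⟩
  constructor
  · intro hioco
    refine ⟨fun σ hσ => absurd hσ.2 (Set.notMem_empty σ), ?_⟩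
    rintro w ⟨hwI, σ, hσS, ℓ, hℓ, rfl⟩
    obtain ⟨q₀, hq₀, c, hobs⟩ := hwI
    obtain ⟨d, hd1, hd2⟩ := VPTS.obs_split hobs σ [ℓ] rfl
    have hout : ℓ ∈ I.outSet LU (I.after (q₀, []) σ) := ⟨hℓ, d, hd1, c, hd2⟩
    obtain ⟨s₀, hs₀, -, e, he1, e', he2⟩ := hioco σ hσS q₀ hq₀ ℓ hout
    exact ⟨s₀, hs₀, e', VPTS.obs_trans he1 he2⟩
  · rintro ⟨-, hconf⟩ σ hσS q₀ hq₀ ℓ ⟨hℓ, c, hc, c', hc'⟩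
    have hw : σ ++ [ℓ] ∈ I.otr := ⟨q₀, hq₀, c', VPTS.obs_trans hc hc'⟩
    obtain ⟨s₀, hs₀, e, hobs⟩ := hconf (σ ++ [ℓ]) ⟨hw, σ, hσS, ℓ, hℓ, rfl⟩
    obtain ⟨d, hd1, hd2⟩ := VPTS.obs_split hobs σ [ℓ] rfl
    exact ⟨s₀, hs₀, hℓ, d, hd1, e, hd2⟩
end
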